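/- arXiv:2510.27323 — 4 statements merged into one kernel-verified Lean document; each statement's English description precedes it below -/
import Mathlib

section
/- Let (T_k) be i.i.d. Exp(1) random variables, S_k = T_1 + ... + T_k. For any α ∈ (0,1] and β ≥ 0 there exists C = C(α,β) > 0 such that for all ε > 0, k ≥ 1, and r ∈ [(k-1)ε, kε], E|r^α - (ε S_k)^α|^β ≤ C (kε)^{αβ} k^{-β/2}. -/
open scoped ENNReal NNReal
open MeasureTheory ProbabilityTheory Real Set

lemma aux_abs_rpow_sub_rpow_le {α : ℝ} (hα0 : 0 < α) (hα1 : α ≤ 1) :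
    ∀ a b c : ℝ, 0 ≤ a → 0 ≤ b → 0 < c → c ≤ max a b →
    |a ^ α - b ^ α| ≤ c ^ (α - 1) * |a - b| := by
  have key : ∀ a b c : ℝ, 0 ≤ a → 0 ≤ b → 0 < c → c ≤ max a b → b ≤ a →
      |a ^ α - b ^ α| ≤ c ^ (α - 1) * |a - b| := by
    intro a b c ha hb hc hmax hab
    have hca : c ≤ a := by rwa [max_eq_left hab] at hmax
    have ha0 : 0 < a := lt_of_lt_of_le hc hca
    rw [abs_of_nonneg (sub_nonneg.2 (rpow_le_rpow hb hab hα0.le)),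
      abs_of_nonneg (sub_nonneg.2 hab)]
    have h2 : a ^ (α - 1) ≤ c ^ (α - 1) :=
      rpow_le_rpow_of_nonpos hc hca (by linarith)
    have h1 : a ^ α - b ^ α ≤ a ^ (α - 1) * (a - b) := by
      have hb' : a ^ (α - 1) * b ≤ b ^ α := by
        rcases eq_or_lt_of_le hb with h | hb0
        · simp [← h, Real.zero_rpow hα0.ne']
        · have : a ^ (α - 1) ≤ b ^ (α - 1) :=
            rpow_le_rpow_of_nonpos hb0 hab (by linarith)
          calc a ^ (α - 1) * b ≤ b ^ (α - 1) * b := by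
                exact mul_le_mul_of_nonneg_right this hb
            _ = b ^ α := by
                nth_rewrite 2 [← Real.rpow_one b]
                rw [← Real.rpow_add hb0]; ring_nf
      have haa : a ^ (α - 1) * a = a ^ α := by
        nth_rewrite 2 [← Real.rpow_one a]
        rw [← Real.rpow_add ha0]; ring_nf
      nlinarith [haa]
    calc a ^ α - b ^ α ≤ a ^ (α - 1) * (a - b) := h1
      _ ≤ c ^ (α - 1) * (a - b) := mul_le_mul_of_nonneg_right h2 (by linarith)
  intro a b c ha hb hc hmax
  rcases le_total b a with hab | hab
  · exact key a b c ha hb hc hmax hab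
  · rw [abs_sub_comm, abs_sub_comm a b]
    exact key b a c hb ha hc (by rwa [max_comm]) hab

lemma aux_rpow_le_exp {γ c : ℝ} (hγ : 0 ≤ γ) (hc : 0 < c) :
    ∃ M : ℝ, 0 < M ∧ ∀ u : ℝ, 0 ≤ u → u ^ γ ≤ M * Real.exp (c * u) := by
  rcases eq_or_lt_of_le hγ with h0 | hγ0
  · exact ⟨1, one_pos, fun u hu => by
      simp [← h0, Real.rpow_zero]
      positivity⟩
  · refine ⟨(γ / c) ^ γ, rpow_pos_of_pos (by positivity) _, fun u hu => ?_⟩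
    rcases eq_or_lt_of_le hu with h0u | hu0
    · rw [← h0u, Real.zero_rpow hγ0.ne']
      positivity
    · have hlog : Real.log u ≤ c * u / γ - 1 + Real.log (γ / c) := by
        have h1 : Real.log (c * u / γ) ≤ c * u / γ - 1 :=
          Real.log_le_sub_one_of_pos (by positivity)
        have h2 : Real.log (c * u / γ) = Real.log u - Real.log (γ / c) := by
          rw [show c * u / γ = u / (γ / c) by field_simp, Real.log_div hu0.ne' (by positivity)]
        linarith
      have : γ * Real.log u ≤ c * u + γ * Real.log (γ / c) := by
        have := mul_le_mul_of_nonneg_left hlog hγ0.le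
        have hγc : γ * (c * u / γ) = c * u := by field_simp
        nlinarith
      calc u ^ γ = Real.exp (γ * Real.log u) := by
            rw [Real.rpow_def_of_pos hu0, mul_comm]
        _ ≤ Real.exp (c * u + γ * Real.log (γ / c)) := Real.exp_le_exp.2 this
        _ = (γ / c) ^ γ * Real.exp (c * u) := by
            rw [Real.exp_add, Real.rpow_def_of_pos (by positivity), mul_comm (Real.exp _), mul_comm γ]

lemma aux_rpow_mul_exp_neg_le {γ a : ℝ} (hγ : 0 ≤ γ) (ha : 0 < a) :
    ∃ M : ℝ, 0 < M ∧ ∀ u : ℝ, 0 ≤ u → u ^ γ * Real.exp (-(a * u)) ≤ M := by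
  obtain ⟨M, hM, h⟩ := aux_rpow_le_exp hγ (half_pos ha)
  refine ⟨M, hM, fun u hu => ?_⟩
  calc u ^ γ * Real.exp (-(a * u)) ≤ (M * Real.exp (a / 2 * u)) * Real.exp (-(a * u)) := by
        exact mul_le_mul_of_nonneg_right (h u hu) (Real.exp_pos _).le
    _ = M * Real.exp (a / 2 * u - a * u) := by rw [mul_assoc, ← Real.exp_add]; ring_nf
    _ ≤ M * 1 := by
        refine mul_le_mul_of_nonneg_left ?_ hM.le
        rw [← Real.exp_zero]
        exact Real.exp_le_exp.2 (by nlinarith)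
    _ = M := mul_one M

lemma aux_one_add_rpow {β : ℝ} (hβ : 0 ≤ β) {u : ℝ} (hu : 0 ≤ u) :
    (1 + u) ^ β ≤ 2 ^ β * (1 + u ^ β) := by
  rcases le_total u 1 with h | h
  · calc (1 + u) ^ β ≤ 2 ^ β := rpow_le_rpow (by linarith) (by linarith) hβ
      _ ≤ 2 ^ β * (1 + u ^ β) := by
          nth_rewrite 1 [← mul_one ((2:ℝ) ^ β)]
          refine mul_le_mul_of_nonneg_left ?_ (by positivity)
          nlinarith [Real.rpow_nonneg hu β]
  · calc (1 + u) ^ β ≤ (2 * u) ^ β := rpow_le_rpow (by linarith) (by linarith) hβ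
      _ = 2 ^ β * u ^ β := Real.mul_rpow (by norm_num) hu
      _ ≤ 2 ^ β * (1 + u ^ β) := by
          refine mul_le_mul_of_nonneg_left (by linarith) (by positivity)

lemma aux_expPDF_indicator {s : ℝ} :
    (fun x : ℝ => exponentialPDFReal 1 x * Real.exp (s * x)) =
      Set.indicator (Ici (0:ℝ)) (fun x => Real.exp (-((1 - s) * x))) := by
  funext x
  rw [exponentialPDFReal, gammaPDFReal]
  by_cases hx : (0:ℝ) ≤ x
  · rw [if_pos hx, Set.indicator_of_mem (mem_Ici.2 hx)]
    simp only [Real.rpow_one, Real.Gamma_one, div_one, sub_self, Real.rpow_zero, one_mul, mul_one]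
    rw [← Real.exp_add]
    ring_nf
  · rw [if_neg hx, Set.indicator_of_notMem (by rwa [mem_Ici]), zero_mul]

lemma aux_integrable_exp_expMeasure {s : ℝ} (hs : s < 1) :
    Integrable (fun x => Real.exp (s * x)) (expMeasure 1) := by
  rw [expMeasure, gammaMeasure]
  have hm : Measurable (gammaPDF 1 1) := (measurable_gammaPDFReal 1 1).ennreal_ofReal
  rw [integrable_withDensity_iff hm (ae_of_all _ fun _ => ENNReal.ofReal_lt_top)]
  have heq : (fun x : ℝ => Real.exp (s * x) * (gammaPDF 1 1 x).toReal) =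
      Set.indicator (Ici (0:ℝ)) (fun x => Real.exp (-((1 - s) * x))) := by
    rw [← aux_expPDF_indicator]
    funext x
    rw [gammaPDF, ENNReal.toReal_ofReal (gammaPDFReal_nonneg one_pos one_pos x)]
    rw [mul_comm]
    rfl
  rw [heq, integrable_indicator_iff measurableSet_Ici]
  have hIoi : IntegrableOn (fun x => Real.exp (-((1 - s) * x))) (Ioi (0:ℝ)) :=
    (exp_neg_integrableOn_Ioi 0 (by linarith : (0:ℝ) < 1 - s)).congr_fun
      (fun x _ => by simp only [neg_mul]) measurableSet_Ioi
  exact (integrableOn_Ici_iff_integrableOn_Ioi (by simp)).2 hIoi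

lemma aux_integral_exp_expMeasure {s : ℝ} (hs : s < 1) :
    ∫ x, Real.exp (s * x) ∂(expMeasure 1) = (1 - s)⁻¹ := by
  rw [expMeasure, gammaMeasure]
  have h0 : (volume.withDensity (gammaPDF 1 1)) =
      volume.withDensity (fun x => ((gammaPDFReal 1 1 x).toNNReal : ℝ≥0∞)) := rfl
  rw [h0, integral_withDensity_eq_integral_smul (measurable_gammaPDFReal 1 1).real_toNNReal _]
  have h1 : (fun x => (gammaPDFReal 1 1 x).toNNReal • Real.exp (s * x)) =
      Set.indicator (Ici (0:ℝ)) (fun x => Real.exp (-((1 - s) * x))) := by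
    rw [← aux_expPDF_indicator]
    funext x
    rw [NNReal.smul_def, smul_eq_mul, Real.coe_toNNReal _ (gammaPDFReal_nonneg one_pos one_pos x)]
    rfl
  rw [h1, integral_indicator measurableSet_Ici, integral_Ici_eq_integral_Ioi]
  have h := integral_rpow_mul_exp_neg_mul_Ioi (one_pos) (show (0:ℝ) < 1 - s by linarith)
  simp only [sub_self, Real.rpow_zero, one_mul, Real.rpow_one, Real.Gamma_one, mul_one,
    one_div] at h
  exact h

lemma aux_exp_abs_le (x : ℝ) : Real.exp |x| ≤ Real.exp x + Real.exp (-x) := by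
  rcases abs_cases x with ⟨h, _⟩ | ⟨h, _⟩ <;> rw [h] <;>
    nlinarith [Real.exp_pos x, Real.exp_pos (-x)]

lemma aux_base_pos {l : ℝ} (h0 : 0 ≤ l) (h2 : l ≤ 1/2) :
    Real.exp (-l) * (1 - l)⁻¹ ≤ Real.exp (2 * l ^ 2) := by
  have hpos : (0:ℝ) < 1 - l := by linarith
  have h1 : (1 - l)⁻¹ ≤ 1 + l + 2 * l ^ 2 := by
    rw [inv_eq_one_div, div_le_iff₀ hpos]
    nlinarith
  have h2' : 1 + l + 2 * l ^ 2 ≤ Real.exp (l + 2 * l ^ 2) := by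
    have := Real.add_one_le_exp (l + 2 * l ^ 2)
    linarith
  calc Real.exp (-l) * (1 - l)⁻¹ ≤ Real.exp (-l) * Real.exp (l + 2 * l ^ 2) :=
        mul_le_mul_of_nonneg_left (h1.trans h2') (Real.exp_pos _).le
    _ = Real.exp (2 * l ^ 2) := by rw [← Real.exp_add]; ring_nf

lemma aux_base_neg {l : ℝ} (h0 : 0 ≤ l) (h2 : l ≤ 1/2) :
    Real.exp l * (1 + l)⁻¹ ≤ Real.exp (2 * l ^ 2) := by
  have hpos : (0:ℝ) < 1 + l := by linarith
  have hx : l - 2 * l ^ 2 < 1 := by nlinarith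
  set u := l - 2 * l ^ 2 with hu
  have hp : (0:ℝ) < 1 - u := by rw [hu]; nlinarith
  have hexp : Real.exp u ≤ (1 - u)⁻¹ := by
    rw [inv_eq_one_div, le_div_iff₀ hp]
    have h1 : 1 - u ≤ Real.exp (-u) := by have := Real.add_one_le_exp (-u); linarith
    have h2 : Real.exp (-u) * Real.exp u = 1 := by rw [← Real.exp_add]; simp
    nlinarith [Real.exp_pos u]
  have hinv : (1 - u)⁻¹ ≤ 1 + l := by
    rw [inv_eq_one_div, div_le_iff₀ hp, hu]
    nlinarith
  calc Real.exp l * (1 + l)⁻¹ = Real.exp u * Real.exp (2 * l ^ 2) * (1 + l)⁻¹ := by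
        rw [← Real.exp_add, hu]; ring_nf
    _ ≤ (1 + l) * Real.exp (2 * l ^ 2) * (1 + l)⁻¹ := by
        have h4 := hexp.trans hinv
        have h3 : (0:ℝ) ≤ Real.exp (2 * l ^ 2) * (1 + l)⁻¹ := by positivity
        calc Real.exp u * Real.exp (2 * l ^ 2) * (1 + l)⁻¹
            = Real.exp u * (Real.exp (2 * l ^ 2) * (1 + l)⁻¹) := by ring
          _ ≤ (1 + l) * (Real.exp (2 * l ^ 2) * (1 + l)⁻¹) := mul_le_mul_of_nonneg_right h4 h3
          _ = (1 + l) * Real.exp (2 * l ^ 2) * (1 + l)⁻¹ := by ring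
    _ = Real.exp (2 * l ^ 2) * ((1 + l) * (1 + l)⁻¹) := by ring
    _ = Real.exp (2 * l ^ 2) := by rw [mul_inv_cancel₀ hpos.ne', mul_one]

lemma aux_mgf_T {Ω : Type*} [MeasurableSpace Ω] (P : Measure Ω) (X : Ω → ℝ)
    (hX : Measurable X) (hd : P.map X = expMeasure 1) {s : ℝ} (hs : s < 1) :
    Integrable (fun ω => Real.exp (s * X ω)) P ∧
      ∫ ω, Real.exp (s * X ω) ∂P = (1 - s)⁻¹ := by
  have hint : Integrable (fun x => Real.exp (s * x)) (P.map X) := by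
    rw [hd]; exact aux_integrable_exp_expMeasure hs
  have hsm : AEStronglyMeasurable (fun x => Real.exp (s * x)) (P.map X) :=
    (Real.measurable_exp.comp (measurable_const.mul measurable_id)).aestronglyMeasurable
  refine ⟨(integrable_map_measure hsm hX.aemeasurable).1 hint, ?_⟩
  rw [← integral_map hX.aemeasurable hsm, hd, aux_integral_exp_expMeasure hs]

lemma aux_ae_nonneg {Ω : Type*} [MeasurableSpace Ω] (P : Measure Ω) (X : Ω → ℝ)
    (hX : Measurable X) (hd : P.map X = expMeasure 1) :
    ∀ᵐ ω ∂P, 0 ≤ X ω := by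
  have hmap : P.map X (Set.Iio 0) = 0 := by
    rw [hd, expMeasure, gammaMeasure, withDensity_apply _ measurableSet_Iio]
    exact lintegral_gammaPDF_of_nonpos le_rfl
  have : P {ω | X ω < 0} = 0 := by
    rw [← hmap, Measure.map_apply hX measurableSet_Iio]
    rfl
  rw [ae_iff]
  simpa [not_le] using this

set_option maxHeartbeats 2000000 in
/-- For i.i.d. `Exp(1)` random variables `(T_k)` with partial sums `S_k`, any `α ∈ (0,1]`
and `β ≥ 0`, there is `C = C(α,β) > 0` such that for all `ε > 0`, `k ≥ 1` and
`r ∈ [(k-1)ε, kε]`, `E|r^α - (ε S_k)^α|^β ≤ C (kε)^{αβ} k^{-β/2}`. -/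
theorem stmt_1 {Ω : Type*} [MeasurableSpace Ω] (P : Measure Ω) [IsProbabilityMeasure P]
    (T : ℕ → Ω → ℝ) (hmeas : ∀ i, Measurable (T i))
    (hindep : iIndepFun T P)
    (hdist : ∀ i, P.map (T i) = expMeasure 1)
    (α β : ℝ) (hα0 : 0 < α) (hα1 : α ≤ 1) (hβ : 0 ≤ β) :
    ∃ C > 0, ∀ (ε : ℝ) (k : ℕ), 0 < ε → 1 ≤ k →
      ∀ r ∈ Set.Icc (((k : ℝ) - 1) * ε) ((k : ℝ) * ε),
        (∫ ω, |r ^ α - (ε * ∑ i ∈ Finset.range k, T i ω) ^ α| ^ β ∂P) ≤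
          C * ((k : ℝ) * ε) ^ (α * β) * (k : ℝ) ^ (-(β / 2)) := by
  obtain ⟨M, hM, hMle⟩ := aux_rpow_le_exp hβ one_pos
  have hlog2 : (0:ℝ) < Real.log 2 - 1/2 := by
    have := Real.log_two_gt_d9; norm_num at this ⊢; linarith
  obtain ⟨M₂, hM₂, hM₂le⟩ := aux_rpow_mul_exp_neg_le (γ := β/2) (by linarith) hlog2
  set C₁ : ℝ := 2 ^ ((1-α)*β) * 2 ^ β * (1 + 2 * Real.exp 1 * M * 2 ^ β) with hC₁def
  have hC₁pos : 0 < C₁ := by positivity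
  refine ⟨C₁ + M₂, by positivity, ?_⟩
  intro ε k hε hk r hr
  set kR : ℝ := (k : ℝ) with hkRdef
  have hk1 : (1:ℝ) ≤ kR := by rw [hkRdef]; exact_mod_cast hk
  have hk0 : (0:ℝ) < kR := by linarith
  have hsq1 : 1 ≤ Real.sqrt kR := by
    rw [show (1:ℝ) = Real.sqrt 1 by rw [Real.sqrt_one]]
    exact Real.sqrt_le_sqrt hk1
  have hsq0 : 0 < Real.sqrt kR := by linarith
  set lam : ℝ := (2 * Real.sqrt kR)⁻¹ with hlamdef
  have hlam0 : 0 < lam := by positivity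
  have hlam2 : lam ≤ 1/2 := by
    rw [hlamdef]
    rw [show (1:ℝ)/2 = (2:ℝ)⁻¹ by norm_num]
    apply inv_anti₀ two_pos
    nlinarith
  have hlam1 : lam < 1 := by linarith
  have hlamk : kR * lam ^ 2 = 1/4 := by
    rw [hlamdef]
    have : Real.sqrt kR ^ 2 = kR := Real.sq_sqrt hk0.le
    field_simp
    nlinarith
  set S : Ω → ℝ := fun ω => ∑ i ∈ Finset.range k, T i ω with hSdef
  have hXS : (∑ i ∈ Finset.range k, T i) = S := by
    funext ω; rw [hSdef]; simp [Finset.sum_apply]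
  have hSmeas : Measurable S := by
    rw [hSdef]; exact Finset.measurable_sum _ (fun i _ => hmeas i)
  -- mgf facts for S
  have hmgfS : ∀ s : ℝ, s < 1 →
      Integrable (fun ω => Real.exp (s * S ω)) P ∧
        ∫ ω, Real.exp (s * S ω) ∂P = ((1 - s)⁻¹) ^ k := by
    intro s hs
    have h1 : ∀ i ∈ Finset.range k, Integrable (fun ω => Real.exp (s * T i ω)) P :=
      fun i _ => (aux_mgf_T P (T i) (hmeas i) (hdist i) hs).1
    have hint := hindep.integrable_exp_mul_sum hmeas h1
    have hval := hindep.mgf_sum hmeas (Finset.range k) (t := s)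
    rw [hXS] at hint hval
    refine ⟨hint, ?_⟩
    have h2 : ∀ i ∈ Finset.range k, mgf (T i) P s = (1 - s)⁻¹ :=
      fun i _ => (aux_mgf_T P (T i) (hmeas i) (hdist i) hs).2
    calc ∫ ω, Real.exp (s * S ω) ∂P = mgf S P s := rfl
      _ = ∏ i ∈ Finset.range k, mgf (T i) P s := hval
      _ = ((1 - s)⁻¹) ^ k := by
          rw [Finset.prod_congr rfl h2, Finset.prod_const, Finset.card_range]
  -- a.s. nonnegativity
  have hae : ∀ᵐ ω ∂P, 0 ≤ S ω := by
    have h1 : ∀ᵐ ω ∂P, ∀ i : ℕ, 0 ≤ T i ω :=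
      MeasureTheory.ae_all_iff.2 (fun i => aux_ae_nonneg P (T i) (hmeas i) (hdist i))
    filter_upwards [h1] with ω hω
    exact Finset.sum_nonneg (fun i _ => hω i)
  -- event
  set E : Set Ω := {ω | S ω ≤ kR/2} with hEdef
  have hEmeas : MeasurableSet E := hSmeas measurableSet_Iic
  -- Chernoff bound
  have hcher : (P E).toReal ≤ M₂ * kR ^ (-(β/2)) := by
    have h1 := measure_le_le_exp_mul_mgf (X := S) (μ := P) (kR/2) (t := -1)
      (by norm_num) (hmgfS (-1) (by norm_num)).1
    have h2 : mgf S P (-1) = ((2:ℝ)⁻¹) ^ k := by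
      have := (hmgfS (-1) (by norm_num)).2
      rw [show ((1:ℝ) - (-1))⁻¹ = (2:ℝ)⁻¹ by norm_num] at this
      exact this
    rw [h2] at h1
    have h3 : Real.exp (-(-1) * (kR/2)) * ((2:ℝ)⁻¹) ^ k =
        Real.exp (-((Real.log 2 - 1/2) * kR)) := by
      rw [show ((2:ℝ)⁻¹) = Real.exp (-(Real.log 2)) by
        rw [Real.exp_neg, Real.exp_log two_pos]]
      rw [← Real.exp_nat_mul, ← Real.exp_add]
      congr 1
      push_cast [← hkRdef]
      ring
    rw [h3] at h1
    have hone : kR ^ (-(β/2)) * kR ^ (β/2) = 1 := by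
      rw [← Real.rpow_add hk0]; norm_num
    have h4 := hM₂le kR hk0.le
    calc (P E).toReal ≤ Real.exp (-((Real.log 2 - 1/2) * kR)) := h1
      _ = (kR ^ (-(β/2)) * kR ^ (β/2)) * Real.exp (-((Real.log 2 - 1/2) * kR)) := by
          rw [hone, one_mul]
      _ = kR ^ (-(β/2)) * (kR ^ (β/2) * Real.exp (-((Real.log 2 - 1/2) * kR))) := by ring
      _ ≤ kR ^ (-(β/2)) * M₂ := by
          exact mul_le_mul_of_nonneg_left (hM₂le kR hk0.le) (Real.rpow_nonneg hk0.le _)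
      _ = M₂ * kR ^ (-(β/2)) := by ring
  -- tilted exponential integrals
  have hplus : Integrable (fun ω => Real.exp (lam * (S ω - kR))) P ∧
      ∫ ω, Real.exp (lam * (S ω - kR)) ∂P ≤ Real.exp 1 := by
    have heq : (fun ω => Real.exp (lam * (S ω - kR))) =
        fun ω => Real.exp (-(lam * kR)) * Real.exp (lam * S ω) := by
      funext ω; rw [← Real.exp_add]; ring_nf
    constructor
    · rw [heq]; exact ((hmgfS lam hlam1).1.const_mul _)
    · rw [heq, integral_const_mul, (hmgfS lam hlam1).2]
      have e1 : Real.exp (-(lam * kR)) = (Real.exp (-lam)) ^ k := by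
        rw [← Real.exp_nat_mul]; congr 1; rw [hkRdef]; ring
      rw [e1, ← mul_pow]
      calc (Real.exp (-lam) * (1 - lam)⁻¹) ^ k ≤ (Real.exp (2 * lam^2)) ^ k := by
            refine pow_le_pow_left₀ ?_ (aux_base_pos hlam0.le hlam2) k
            exact mul_nonneg (Real.exp_pos _).le (inv_nonneg.2 (by linarith))
        _ = Real.exp (kR * (2 * lam^2)) := by rw [← Real.exp_nat_mul, hkRdef]
        _ ≤ Real.exp 1 := by
            refine Real.exp_le_exp.2 ?_
            have : kR * (2 * lam ^ 2) = 2 * (kR * lam ^ 2) := by ring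
            rw [this, hlamk]; norm_num
  have hminus : Integrable (fun ω => Real.exp (-(lam * (S ω - kR)))) P ∧
      ∫ ω, Real.exp (-(lam * (S ω - kR))) ∂P ≤ Real.exp 1 := by
    have hneg1 : -lam < 1 := by linarith
    have heq : (fun ω => Real.exp (-(lam * (S ω - kR)))) =
        fun ω => Real.exp (lam * kR) * Real.exp ((-lam) * S ω) := by
      funext ω; rw [← Real.exp_add]; ring_nf
    constructor
    · rw [heq]; exact ((hmgfS (-lam) hneg1).1.const_mul _)
    · rw [heq, integral_const_mul, (hmgfS (-lam) hneg1).2]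
      have e1 : Real.exp (lam * kR) = (Real.exp lam) ^ k := by
        rw [← Real.exp_nat_mul]; congr 1; rw [hkRdef]; ring
      rw [show (1:ℝ) - -lam = 1 + lam by ring, e1, ← mul_pow]
      calc (Real.exp lam * (1 + lam)⁻¹) ^ k ≤ (Real.exp (2 * lam^2)) ^ k := by
            refine pow_le_pow_left₀ ?_ (aux_base_neg hlam0.le hlam2) k
            exact mul_nonneg (Real.exp_pos _).le (inv_nonneg.2 (by linarith))
        _ = Real.exp (kR * (2 * lam^2)) := by rw [← Real.exp_nat_mul, hkRdef]
        _ ≤ Real.exp 1 := by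
            refine Real.exp_le_exp.2 ?_
            have : kR * (2 * lam ^ 2) = 2 * (kR * lam ^ 2) := by ring
            rw [this, hlamk]; norm_num
  -- the dominating function
  set c₀ : ℝ := ((ε * kR / 2) ^ (α - 1)) ^ β * ε ^ β * 2 ^ β with hc₀def
  have hc₀nn : 0 ≤ c₀ := by positivity
  set cM : ℝ := c₀ * (M * (lam⁻¹) ^ β) with hcMdef
  have hcMnn : 0 ≤ cM := by positivity
  set B : ℝ := (kR * ε) ^ (α * β) with hBdef
  have hBnn : 0 ≤ B := by positivity
  set g : Ω → ℝ := fun ω => c₀ + cM * (Real.exp (lam * (S ω - kR)) +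
      Real.exp (-(lam * (S ω - kR)))) + E.indicator (fun _ => B) ω with hgdef
  have hgint : Integrable g P := by
    refine (Integrable.add ?_ ?_)
    · exact (integrable_const c₀).add ((hplus.1.add hminus.1).const_mul cM)
    · rw [integrable_indicator_iff hEmeas]
      exact integrableOn_const (measure_lt_top P E).ne
  have hr0 : 0 ≤ r := le_trans (mul_nonneg (by linarith) hε.le) hr.1
  -- pointwise domination
  have hpt : ∀ᵐ ω ∂P, |r ^ α - (ε * S ω) ^ α| ^ β ≤ g ω := by
    filter_upwards [hae] with ω hSnn
    have hεS : 0 ≤ ε * S ω := mul_nonneg hε.le hSnn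
    have hQpos : 0 < Real.exp (lam * (S ω - kR)) + Real.exp (-(lam * (S ω - kR))) := by
      positivity
    by_cases hcase : S ω ≤ kR/2
    · -- small S
      have hmem : ω ∈ E := hcase
      rw [hgdef]
      simp only [Set.indicator_of_mem hmem]
      have hεSK : ε * S ω ≤ kR * ε := by nlinarith
      have hrK : r ≤ kR * ε := hr.2
      have habs : |r ^ α - (ε * S ω) ^ α| ≤ (kR * ε) ^ α := by
        have h1 : r ^ α ≤ (kR * ε) ^ α := Real.rpow_le_rpow hr0 hrK hα0.le
        have h2 : (ε * S ω) ^ α ≤ (kR * ε) ^ α := Real.rpow_le_rpow hεS hεSK hα0.le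
        have h3 : 0 ≤ r ^ α := Real.rpow_nonneg hr0 α
        have h4 : 0 ≤ (ε * S ω) ^ α := Real.rpow_nonneg hεS α
        rw [abs_le]; constructor <;> linarith
      have h5 : |r ^ α - (ε * S ω) ^ α| ^ β ≤ ((kR * ε) ^ α) ^ β :=
        Real.rpow_le_rpow (abs_nonneg _) habs hβ
      have h6 : ((kR * ε) ^ α) ^ β = B := by
        rw [hBdef, ← Real.rpow_mul (by positivity)]
      rw [h6] at h5
      have h7 : 0 ≤ cM * (Real.exp (lam * (S ω - kR)) + Real.exp (-(lam * (S ω - kR)))) :=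
        mul_nonneg hcMnn hQpos.le
      linarith
    · -- large S
      push_neg at hcase
      have hnotmem : ω ∉ E := by rw [hEdef]; exact not_le.2 hcase
      rw [hgdef]
      simp only [Set.indicator_of_notMem hnotmem, add_zero]
      have hc : (0:ℝ) < ε * kR / 2 := by positivity
      have hmax : ε * kR / 2 ≤ max r (ε * S ω) :=
        le_trans (by nlinarith) (le_max_right r (ε * S ω))
      have h1 : |r ^ α - (ε * S ω) ^ α| ≤ (ε * kR / 2) ^ (α - 1) * |r - ε * S ω| :=
        aux_abs_rpow_sub_rpow_le hα0 hα1 r (ε * S ω) (ε * kR / 2) hr0 hεS hc hmax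
      have h2 : |r - ε * S ω| ≤ ε * (1 + |S ω - kR|) := by
        have ha : |r - ε * kR| ≤ ε := by
          rw [abs_le]; constructor <;> nlinarith [hr.1, hr.2]
        have hb : |ε * kR - ε * S ω| = ε * |S ω - kR| := by
          rw [show ε * kR - ε * S ω = -(ε * (S ω - kR)) by ring, abs_neg, abs_mul,
            abs_of_pos hε]
        calc |r - ε * S ω| ≤ |r - ε * kR| + |ε * kR - ε * S ω| := abs_sub_le _ _ _
          _ ≤ ε + ε * |S ω - kR| := by rw [hb]; linarith
          _ = ε * (1 + |S ω - kR|) := by ring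
      have hP1 : (0:ℝ) ≤ (ε * kR / 2) ^ (α - 1) := Real.rpow_nonneg hc.le _
      have h3 : |r ^ α - (ε * S ω) ^ α| ^ β ≤
          ((ε * kR / 2) ^ (α - 1)) ^ β * (ε * (1 + |S ω - kR|)) ^ β := by
        calc |r ^ α - (ε * S ω) ^ α| ^ β
            ≤ ((ε * kR / 2) ^ (α - 1) * (ε * (1 + |S ω - kR|))) ^ β := by
              refine Real.rpow_le_rpow (abs_nonneg _) ?_ hβ
              exact h1.trans (mul_le_mul_of_nonneg_left h2 hP1)
          _ = ((ε * kR / 2) ^ (α - 1)) ^ β * (ε * (1 + |S ω - kR|)) ^ β :=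
              Real.mul_rpow hP1 (by positivity)
      have h4 : (ε * (1 + |S ω - kR|)) ^ β = ε ^ β * (1 + |S ω - kR|) ^ β :=
        Real.mul_rpow hε.le (by positivity)
      have h5 : (1 + |S ω - kR|) ^ β ≤ 2 ^ β * (1 + |S ω - kR| ^ β) :=
        aux_one_add_rpow hβ (abs_nonneg _)
      have h6 : |S ω - kR| ^ β ≤ (lam⁻¹) ^ β * (M * (Real.exp (lam * (S ω - kR)) +
          Real.exp (-(lam * (S ω - kR))))) := by
        have ha : |S ω - kR| = lam⁻¹ * (lam * |S ω - kR|) := by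
          rw [← mul_assoc, inv_mul_cancel₀ hlam0.ne', one_mul]
        rw [ha, Real.mul_rpow (inv_nonneg.2 hlam0.le) (by positivity)]
        refine mul_le_mul_of_nonneg_left ?_ (Real.rpow_nonneg (inv_nonneg.2 hlam0.le) _)
        have hb : (lam * |S ω - kR|) ^ β ≤ M * Real.exp (1 * (lam * |S ω - kR|)) :=
          hMle _ (by positivity)
        rw [one_mul] at hb
        refine hb.trans (mul_le_mul_of_nonneg_left ?_ hM.le)
        have hc' : lam * |S ω - kR| = |lam * (S ω - kR)| := by
          rw [abs_mul, abs_of_pos hlam0]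
        rw [hc']
        exact aux_exp_abs_le _
      -- combine
      have hchain : |r ^ α - (ε * S ω) ^ α| ^ β ≤
          ((ε * kR / 2) ^ (α - 1)) ^ β * (ε ^ β * (2 ^ β * (1 + (lam⁻¹) ^ β *
            (M * (Real.exp (lam * (S ω - kR)) + Real.exp (-(lam * (S ω - kR)))))))) := by
        refine h3.trans ?_
        rw [h4]
        have hP1b : (0:ℝ) ≤ ((ε * kR / 2) ^ (α - 1)) ^ β := Real.rpow_nonneg hP1 _
        refine mul_le_mul_of_nonneg_left ?_ hP1b
        refine mul_le_mul_of_nonneg_left ?_ (Real.rpow_nonneg hε.le _)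
        refine h5.trans ?_
        refine mul_le_mul_of_nonneg_left ?_ (by positivity)
        linarith [h6]
      refine hchain.trans (le_of_eq ?_)
      rw [hcMdef, hc₀def]; ring
  -- integrate
  have hint_le : ∫ ω, |r ^ α - (ε * S ω) ^ α| ^ β ∂P ≤ ∫ ω, g ω ∂P := by
    refine integral_mono_of_nonneg ?_ hgint hpt
    exact Filter.Eventually.of_forall (fun ω => Real.rpow_nonneg (abs_nonneg _) β)
  have hint12 : Integrable (fun ω => Real.exp (lam * (S ω - kR)) +
      Real.exp (-(lam * (S ω - kR)))) P := hplus.1.add hminus.1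
  have hint1 : Integrable (fun ω => c₀ + cM * (Real.exp (lam * (S ω - kR)) +
      Real.exp (-(lam * (S ω - kR))))) P := (integrable_const c₀).add (hint12.const_mul cM)
  have hint2 : Integrable (fun ω => E.indicator (fun _ => B) ω) P := by
    have := (integrable_indicator_iff (μ := P) (f := fun _ => B) hEmeas).2
      (integrableOn_const (measure_lt_top P E).ne)
    exact this
  have hgval : ∫ ω, g ω ∂P ≤ c₀ + cM * (2 * Real.exp 1) + B * (M₂ * kR ^ (-(β/2))) := by
    have e0 : ∫ ω, g ω ∂P =
        (∫ ω, (c₀ + cM * (Real.exp (lam * (S ω - kR)) +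
          Real.exp (-(lam * (S ω - kR))))) ∂P) + ∫ ω, E.indicator (fun _ => B) ω ∂P :=
      integral_add hint1 hint2
    have i12 : ∫ ω, (Real.exp (lam * (S ω - kR)) + Real.exp (-(lam * (S ω - kR)))) ∂P =
        (∫ ω, Real.exp (lam * (S ω - kR)) ∂P) +
          ∫ ω, Real.exp (-(lam * (S ω - kR))) ∂P := integral_add hplus.1 hminus.1
    have iA := integral_add (μ := P) (integrable_const c₀) (hint12.const_mul cM)
    rw [integral_const, integral_const_mul, i12] at iA
    simp only [measure_univ, probReal_univ, ENNReal.toReal_one, smul_eq_mul, one_mul] at iA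
    have iInd : ∫ ω, E.indicator (fun _ => B) ω ∂P = (P E).toReal * B := by
      rw [integral_indicator_const _ hEmeas, smul_eq_mul]; rfl
    rw [e0, iA, iInd]
    have h1 : (∫ ω, Real.exp (lam * (S ω - kR)) ∂P) +
        (∫ ω, Real.exp (-(lam * (S ω - kR))) ∂P) ≤ 2 * Real.exp 1 := by
      linarith [hplus.2, hminus.2]
    have h2 : (P E).toReal * B ≤ B * (M₂ * kR ^ (-(β/2))) := by
      rw [mul_comm ((P E).toReal) B]
      exact mul_le_mul_of_nonneg_left hcher hBnn
    have h3 : cM * ((∫ ω, Real.exp (lam * (S ω - kR)) ∂P) +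
        (∫ ω, Real.exp (-(lam * (S ω - kR))) ∂P)) ≤ cM * (2 * Real.exp 1) :=
      mul_le_mul_of_nonneg_left h1 hcMnn
    linarith
  -- final constant accounting
  have hfinal : c₀ + cM * (2 * Real.exp 1) + B * (M₂ * kR ^ (-(β/2))) ≤
      (C₁ + M₂) * (kR * ε) ^ (α * β) * kR ^ (-(β/2)) := by
    have hw : (0:ℝ) < kR * ε := by positivity
    have hlb : (lam⁻¹) ^ β = 2 ^ β * kR ^ (β/2) := by
      rw [hlamdef, inv_inv, Real.mul_rpow (by norm_num) (Real.sqrt_nonneg _),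
        Real.sqrt_eq_rpow, ← Real.rpow_mul hk0.le, show (1:ℝ)/2 * β = β/2 by ring]
    have hc₀ : c₀ = 2 ^ ((1-α)*β) * 2 ^ β * ((kR * ε) ^ (α*β) * kR ^ (-β)) := by
      have hε' : ε = (kR * ε) * kR⁻¹ := by
        rw [mul_comm kR ε, mul_assoc, mul_inv_cancel₀ hk0.ne', mul_one]
      have A1 : ((ε * kR / 2) ^ (α - 1)) ^ β = (ε * kR / 2) ^ ((α-1)*β) :=
        (Real.rpow_mul (by positivity) _ _).symm
      have A2 : (ε * kR / 2) ^ ((α-1)*β) = (kR * ε) ^ ((α-1)*β) * (2:ℝ) ^ ((1-α)*β) := by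
        rw [show ε * kR / 2 = (kR * ε) * 2⁻¹ by ring,
          Real.mul_rpow hw.le (by norm_num), Real.inv_rpow (by norm_num : (0:ℝ) ≤ 2),
          ← Real.rpow_neg (by norm_num : (0:ℝ) ≤ 2), show -((α-1)*β) = (1-α)*β by ring]
      have A3 : ε ^ β = (kR * ε) ^ β * kR ^ (-β) := by
        conv_lhs => rw [hε']
        rw [Real.mul_rpow hw.le (inv_nonneg.2 hk0.le), Real.inv_rpow hk0.le,
          ← Real.rpow_neg hk0.le]
      have A4 : (kR * ε) ^ ((α-1)*β) * (kR * ε) ^ β = (kR * ε) ^ (α*β) := by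
        rw [← Real.rpow_add hw, show (α-1)*β + β = α*β by ring]
      calc c₀ = ((ε * kR / 2) ^ (α - 1)) ^ β * ε ^ β * 2 ^ β := hc₀def
        _ = ((kR * ε) ^ ((α-1)*β) * (2:ℝ) ^ ((1-α)*β)) * ((kR * ε) ^ β * kR ^ (-β)) * 2 ^ β := by
            rw [A1, A2, A3]
        _ = 2 ^ ((1-α)*β) * 2 ^ β * (((kR * ε) ^ ((α-1)*β) * (kR * ε) ^ β) * kR ^ (-β)) := by
            ring
        _ = 2 ^ ((1-α)*β) * 2 ^ β * ((kR * ε) ^ (α*β) * kR ^ (-β)) := by rw [A4]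
    have hkk : kR ^ (-β) * kR ^ (β/2) = kR ^ (-(β/2)) := by
      rw [← Real.rpow_add hk0, show -β + β/2 = -(β/2) by ring]
    have hkb : kR ^ (-β) ≤ kR ^ (-(β/2)) :=
      Real.rpow_le_rpow_of_exponent_le hk1 (by linarith)
    have hterm1 : c₀ + cM * (2 * Real.exp 1) ≤ C₁ * (kR * ε) ^ (α*β) * kR ^ (-(β/2)) := by
      have e1 : c₀ + cM * (2 * Real.exp 1) =
          2 ^ ((1-α)*β) * 2 ^ β * ((kR * ε) ^ (α*β)) *
            (kR ^ (-β) + 2 * Real.exp 1 * M * 2 ^ β * (kR ^ (-β) * kR ^ (β/2))) := by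
        rw [hcMdef, hlb, hc₀]; ring
      rw [e1, hC₁def]
      have e2 : kR ^ (-β) + 2 * Real.exp 1 * M * 2 ^ β * (kR ^ (-β) * kR ^ (β/2)) ≤
          (1 + 2 * Real.exp 1 * M * 2 ^ β) * kR ^ (-(β/2)) := by
        rw [hkk]
        have h2 : 2 * Real.exp 1 * M * 2 ^ β * kR ^ (-(β/2)) ≤
            2 * Real.exp 1 * M * 2 ^ β * kR ^ (-(β/2)) := le_rfl
        nlinarith [Real.rpow_nonneg hk0.le (-(β/2)), Real.exp_pos 1,
          Real.rpow_nonneg (show (0:ℝ) ≤ 2 by norm_num) β, hM.le]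
      calc 2 ^ ((1-α)*β) * 2 ^ β * ((kR * ε) ^ (α*β)) *
            (kR ^ (-β) + 2 * Real.exp 1 * M * 2 ^ β * (kR ^ (-β) * kR ^ (β/2)))
          ≤ 2 ^ ((1-α)*β) * 2 ^ β * ((kR * ε) ^ (α*β)) *
            ((1 + 2 * Real.exp 1 * M * 2 ^ β) * kR ^ (-(β/2))) := by
            refine mul_le_mul_of_nonneg_left e2 (by positivity)
        _ = 2 ^ ((1-α)*β) * 2 ^ β * (1 + 2 * Real.exp 1 * M * 2 ^ β) *
            (kR * ε) ^ (α * β) * kR ^ (-(β/2)) := by ring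
    have hterm2 : B * (M₂ * kR ^ (-(β/2))) = M₂ * (kR * ε) ^ (α*β) * kR ^ (-(β/2)) := by
      rw [hBdef]; ring
    rw [hterm2] at *
    calc c₀ + cM * (2 * Real.exp 1) + M₂ * (kR * ε) ^ (α*β) * kR ^ (-(β/2))
        ≤ C₁ * (kR * ε) ^ (α*β) * kR ^ (-(β/2)) +
          M₂ * (kR * ε) ^ (α*β) * kR ^ (-(β/2)) := by linarith
      _ = (C₁ + M₂) * (kR * ε) ^ (α * β) * kR ^ (-(β/2)) := by ring
  calc (∫ ω, |r ^ α - (ε * ∑ i ∈ Finset.range k, T i ω) ^ α| ^ β ∂P)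
      = ∫ ω, |r ^ α - (ε * S ω) ^ α| ^ β ∂P := rfl
    _ ≤ ∫ ω, g ω ∂P := hint_le
    _ ≤ c₀ + cM * (2 * Real.exp 1) + B * (M₂ * kR ^ (-(β/2))) := hgval
    _ ≤ (C₁ + M₂) * (kR * ε) ^ (α * β) * kR ^ (-(β/2)) := hfinal
end

section
/- For any α, β ∈ [0,1), t > 0, there exists C > 0 such that for all 0 < δ < min(1, t/3), ∫_δ^{t_δ} ( s^{-α} s_δ^{-β} + (t-s)^{-α} (t-s_δ)^{-β} ) ds ≤ C ( δ^{1-α-β} + 1 - 1_{α+β=1} log δ ), where s_δ := kδ for s ∈ [kδ, (k+1)δ) and t_δ := ⌊t/δ⌋ δ. -/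
open intervalIntegral Real MeasureTheory Set

noncomputable def gridPt (δ s : ℝ) : ℝ := δ * ⌊s / δ⌋

section grid
variable {δ s t : ℝ}

lemma gridPt_le (hδ : 0 < δ) : gridPt δ s ≤ s := by
  have := Int.floor_le (s / δ)
  calc gridPt δ s = δ * ⌊s / δ⌋ := rfl
    _ ≤ δ * (s / δ) := by nlinarith
    _ = s := by field_simp

lemma sub_lt_gridPt (hδ : 0 < δ) : s - δ < gridPt δ s := by
  have := Int.sub_one_lt_floor (s / δ)
  have h2 : δ * (s / δ - 1) < δ * ⌊s / δ⌋ := by nlinarith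
  have h3 : δ * (s / δ - 1) = s - δ := by field_simp
  rw [gridPt]; linarith

lemma le_gridPt (hδ : 0 < δ) (hs : δ ≤ s) : δ ≤ gridPt δ s := by
  have h1 : (1 : ℝ) ≤ s / δ := (one_le_div hδ).mpr hs
  have h2 : (1 : ℤ) ≤ ⌊s / δ⌋ := by exact_mod_cast Int.le_floor.mpr (by exact_mod_cast h1)
  have : (1:ℝ) ≤ (⌊s / δ⌋ : ℝ) := by exact_mod_cast h2
  calc δ = δ * 1 := by ring
    _ ≤ δ * ⌊s / δ⌋ := by nlinarith

lemma gridPt_add_le (hδ : 0 < δ) (hst : s < gridPt δ t) : gridPt δ s + δ ≤ gridPt δ t := by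
  have h1 : s / δ < (⌊t / δ⌋ : ℝ) := by
    rw [div_lt_iff₀ hδ]; rw [gridPt] at hst; linarith [hst]
  have h2 : ⌊s / δ⌋ < ⌊t / δ⌋ := Int.floor_lt.mpr (by exact_mod_cast h1)
  have h4 : ((⌊s / δ⌋ : ℝ) + 1) ≤ (⌊t / δ⌋ : ℝ) := by exact_mod_cast h2
  have : δ * ((⌊s / δ⌋ : ℝ) + 1) ≤ δ * ⌊t / δ⌋ := by nlinarith
  calc gridPt δ s + δ = δ * ((⌊s / δ⌋ : ℝ) + 1) := by rw [gridPt]; ring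
    _ ≤ δ * ⌊t / δ⌋ := this
    _ = gridPt δ t := rfl

end grid

lemma key_bound (α β t δ : ℝ) (hα : 0 ≤ α) (hα1 : α < 1) (hβ : 0 ≤ β) (hβ1 : β < 1)
    (ht : 0 < t) (hδ : 0 < δ) (hδ1 : δ < 1) (hδ3 : δ < t / 3)
    (hint : IntervalIntegrable (fun s => s ^ (-α) * (gridPt δ s) ^ (-β) +
      (t - s) ^ (-α) * (t - gridPt δ s) ^ (-β)) volume δ (gridPt δ t)) :
    (∫ s in δ..gridPt δ t,
        s ^ (-α) * (gridPt δ s) ^ (-β) + (t - s) ^ (-α) * (t - gridPt δ s) ^ (-β))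
      ≤ (2 ^ β + 1) * (∫ s in δ..(t - δ), s ^ (-(α + β)))
        + (t / 3) ^ (-α) * (t / 3) ^ (-β) * δ + δ ^ (1 - α - β) / (1 - α) := by
  set f : ℝ → ℝ := fun s => s ^ (-α) * (gridPt δ s) ^ (-β) +
      (t - s) ^ (-α) * (t - gridPt δ s) ^ (-β) with hf
  set tδ := gridPt δ t with htδ
  have htδ_le : tδ ≤ t := gridPt_le hδ
  have htδ_gt : t - δ < tδ := sub_lt_gridPt hδ
  have hmid : δ ≤ t - δ := by linarith
  -- split the integral
  have h1 : IntervalIntegrable f volume δ (t - δ) := by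
    apply hint.mono_set
    rw [Set.uIcc_of_le hmid, Set.uIcc_of_le (by linarith : δ ≤ tδ)]
    exact Set.Icc_subset_Icc le_rfl (by linarith)
  have h2 : IntervalIntegrable f volume (t - δ) tδ := by
    apply hint.mono_set
    rw [Set.uIcc_of_le (by linarith : t - δ ≤ tδ), Set.uIcc_of_le (by linarith : δ ≤ tδ)]
    exact Set.Icc_subset_Icc (by linarith) le_rfl
  have hsplit : (∫ s in δ..tδ, f s) = (∫ s in δ..(t - δ), f s) + ∫ s in (t - δ)..tδ, f s :=
    (integral_add_adjacent_intervals h1 h2).symm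
  -- bound function on first piece
  set g1 : ℝ → ℝ := fun s => 2 ^ β * s ^ (-(α + β)) + (t - s) ^ (-(α + β)) with hg1
  have hcA : ContinuousOn (fun s : ℝ => s ^ (-(α + β))) (Set.uIcc δ (t - δ)) := by
    rw [Set.uIcc_of_le hmid]
    exact continuousOn_id.rpow_const
      (fun x hx => Or.inl (by rw [Set.mem_Icc] at hx; dsimp [id]; nlinarith [hx.1]))
  have hcB : ContinuousOn (fun s : ℝ => (t - s) ^ (-(α + β))) (Set.uIcc δ (t - δ)) := by
    rw [Set.uIcc_of_le hmid]
    exact (continuousOn_const.sub continuousOn_id).rpow_const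
      (fun x hx => Or.inl (by rw [Set.mem_Icc] at hx; dsimp [id]; nlinarith [hx.2]))
  have hAint : IntervalIntegrable (fun s : ℝ => 2 ^ β * s ^ (-(α + β))) volume δ (t - δ) :=
    (continuousOn_const.mul hcA).intervalIntegrable
  have hBint : IntervalIntegrable (fun s : ℝ => (t - s) ^ (-(α + β))) volume δ (t - δ) :=
    hcB.intervalIntegrable
  have hg1int : IntervalIntegrable g1 volume δ (t - δ) := hAint.add hBint
  have hbound1 : (∫ s in δ..(t - δ), f s) ≤ ∫ s in δ..(t - δ), g1 s := by
    apply integral_mono_on hmid h1 hg1int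
    intro s hs
    rw [Set.mem_Icc] at hs
    have hs0 : 0 < s := by linarith
    have hts : 0 < t - s := by linarith [hs.2]
    have hgp : δ ≤ gridPt δ s := le_gridPt hδ hs.1
    have hgl : gridPt δ s ≤ s := gridPt_le hδ
    have hgs : s - δ < gridPt δ s := sub_lt_gridPt hδ
    have hhalf : s / 2 ≤ gridPt δ s := by
      rcases le_or_gt s (2 * δ) with h | h
      · linarith
      · linarith
    have hterm1 : s ^ (-α) * (gridPt δ s) ^ (-β) ≤ 2 ^ β * s ^ (-(α + β)) := by
      have e1 : (gridPt δ s) ^ (-β) ≤ (s / 2) ^ (-β) :=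
        Real.rpow_le_rpow_of_nonpos (by linarith) hhalf (by linarith)
      have e2 : (s / 2 : ℝ) ^ (-β) = 2 ^ β * s ^ (-β) := by
        rw [Real.div_rpow hs0.le (by norm_num), Real.rpow_neg (by norm_num : (0:ℝ) ≤ 2)]
        field_simp
      have e3 : s ^ (-α) * (2 ^ β * s ^ (-β)) = 2 ^ β * s ^ (-(α + β)) := by
        rw [show (-(α+β)) = (-α) + (-β) by ring, Real.rpow_add hs0]; ring
      calc s ^ (-α) * (gridPt δ s) ^ (-β) ≤ s ^ (-α) * (s / 2) ^ (-β) := by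
            exact mul_le_mul_of_nonneg_left e1 (Real.rpow_nonneg hs0.le _)
        _ = 2 ^ β * s ^ (-(α + β)) := by rw [e2, e3]
    have hterm2 : (t - s) ^ (-α) * (t - gridPt δ s) ^ (-β) ≤ (t - s) ^ (-(α + β)) := by
      have e1 : (t - gridPt δ s) ^ (-β) ≤ (t - s) ^ (-β) :=
        Real.rpow_le_rpow_of_nonpos hts (by linarith) (by linarith)
      have e3 : (t - s) ^ (-α) * (t - s) ^ (-β) = (t - s) ^ (-(α + β)) := by
        rw [show (-(α+β)) = (-α) + (-β) by ring, Real.rpow_add hts]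
      calc (t - s) ^ (-α) * (t - gridPt δ s) ^ (-β) ≤ (t - s) ^ (-α) * (t - s) ^ (-β) :=
            mul_le_mul_of_nonneg_left e1 (Real.rpow_nonneg hts.le _)
        _ = (t - s) ^ (-(α + β)) := e3
    exact add_le_add hterm1 hterm2
  -- second piece
  set C1 := (t / 3) ^ (-α) * (t / 3) ^ (-β) with hC1
  have ht3 : (0:ℝ) < t / 3 := by linarith
  have hC1nn : 0 ≤ C1 := mul_nonneg (Real.rpow_nonneg ht3.le _) (Real.rpow_nonneg ht3.le _)
  set g2 : ℝ → ℝ := fun s => C1 + δ ^ (-β) * (t - s) ^ (-α) with hg2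
  have hr' : IntervalIntegrable (fun x : ℝ => (t - x) ^ (-α)) volume (t - δ) tδ := by
    have hr : IntervalIntegrable (fun x : ℝ => x ^ (-α)) volume δ (t - tδ) :=
      intervalIntegrable_rpow' (by linarith)
    simpa using hr.comp_sub_left t
  have hg2int : IntervalIntegrable g2 volume (t - δ) tδ :=
    (_root_.intervalIntegrable_const).add (hr'.const_mul _)
  have hae : ∀ᵐ s ∂(volume.restrict (Set.Icc (t - δ) tδ)), f s ≤ g2 s := by
    have hmem : ∀ᵐ s ∂(volume.restrict (Set.Icc (t - δ) tδ)), s ∈ Set.Icc (t - δ) tδ :=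
      ae_restrict_mem measurableSet_Icc
    have hne : ∀ᵐ s ∂(volume.restrict (Set.Icc (t - δ) tδ)), s ≠ tδ := by
      apply ae_restrict_of_ae
      refine (MeasureTheory.ae_iff).mpr ?_
      simpa using Real.volume_singleton
    filter_upwards [hmem, hne] with s hs hsne
    rw [Set.mem_Icc] at hs
    have hslt : s < tδ := lt_of_le_of_ne hs.2 hsne
    have hs3 : t / 3 ≤ s := by linarith [hs.1]
    have hgl : gridPt δ s ≤ s := gridPt_le hδ
    have hgs : s - δ < gridPt δ s := sub_lt_gridPt hδ
    have hg3 : t / 3 ≤ gridPt δ s := by linarith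
    have hadd : gridPt δ s + δ ≤ tδ := gridPt_add_le hδ hslt
    have hterm1 : s ^ (-α) * (gridPt δ s) ^ (-β) ≤ C1 := by
      have e1 : s ^ (-α) ≤ (t / 3) ^ (-α) :=
        Real.rpow_le_rpow_of_nonpos ht3 hs3 (by linarith)
      have e2 : (gridPt δ s) ^ (-β) ≤ (t / 3) ^ (-β) :=
        Real.rpow_le_rpow_of_nonpos ht3 hg3 (by linarith)
      exact mul_le_mul e1 e2 (Real.rpow_nonneg (by linarith) _) (Real.rpow_nonneg ht3.le _)
    have hterm2 : (t - s) ^ (-α) * (t - gridPt δ s) ^ (-β) ≤ δ ^ (-β) * (t - s) ^ (-α) := by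
      have e1 : (t - gridPt δ s) ^ (-β) ≤ δ ^ (-β) :=
        Real.rpow_le_rpow_of_nonpos hδ (by linarith) (by linarith)
      calc (t - s) ^ (-α) * (t - gridPt δ s) ^ (-β) ≤ (t - s) ^ (-α) * δ ^ (-β) :=
            mul_le_mul_of_nonneg_left e1 (Real.rpow_nonneg (by linarith [hslt, htδ_le] : (0:ℝ) ≤ t - s) _)
        _ = δ ^ (-β) * (t - s) ^ (-α) := mul_comm _ _
    exact add_le_add hterm1 hterm2
  have hbound2 : (∫ s in (t - δ)..tδ, f s) ≤ ∫ s in (t - δ)..tδ, g2 s :=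
    integral_mono_ae_restrict (le_of_lt htδ_gt) h2 hg2int hae
  -- compute ∫ g2
  have hI2eq : (∫ s in (t - δ)..tδ, (t - s) ^ (-α)) = ∫ u in (t - tδ)..δ, u ^ (-α) := by
    have := integral_comp_sub_left (a := t - δ) (b := tδ) (fun u : ℝ => u ^ (-α)) t
    simpa using this
  have hI2val : (∫ u in (t - tδ)..δ, u ^ (-α)) = (δ ^ (-α + 1) - (t - tδ) ^ (-α + 1)) / (-α + 1) :=
    integral_rpow (Or.inl (by linarith))
  have hI2le : (∫ s in (t - δ)..tδ, (t - s) ^ (-α)) ≤ δ ^ (1 - α) / (1 - α) := by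
    rw [hI2eq, hI2val]
    have h0 : (0:ℝ) ≤ (t - tδ) ^ (-α + 1) := Real.rpow_nonneg (by linarith) _
    have he : (-α + 1) = 1 - α := by ring
    rw [he] at h0 ⊢
    apply div_le_div_of_nonneg_right ?_ (by linarith)
    linarith
  have hg2val : (∫ s in (t - δ)..tδ, g2 s)
      = C1 * (tδ - (t - δ)) + δ ^ (-β) * ∫ s in (t - δ)..tδ, (t - s) ^ (-α) := by
    rw [hg2]
    rw [integral_add (_root_.intervalIntegrable_const) (hr'.const_mul _), intervalIntegral.integral_const,
      intervalIntegral.integral_const_mul]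
    simp [smul_eq_mul]; ring
  have hg2le : (∫ s in (t - δ)..tδ, g2 s) ≤ C1 * δ + δ ^ (1 - α - β) / (1 - α) := by
    rw [hg2val]
    have e1 : C1 * (tδ - (t - δ)) ≤ C1 * δ := mul_le_mul_of_nonneg_left (by linarith) hC1nn
    have e2 : δ ^ (-β) * (∫ s in (t - δ)..tδ, (t - s) ^ (-α))
        ≤ δ ^ (-β) * (δ ^ (1 - α) / (1 - α)) :=
      mul_le_mul_of_nonneg_left hI2le (Real.rpow_nonneg hδ.le _)
    have e3 : δ ^ (-β) * (δ ^ (1 - α) / (1 - α)) = δ ^ (1 - α - β) / (1 - α) := by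
      rw [show (1 - α - β) = (-β) + (1 - α) by ring, Real.rpow_add hδ]; ring
    linarith
  -- compute ∫ g1
  have hBeq : (∫ s in δ..(t - δ), (t - s) ^ (-(α + β)))
      = ∫ u in δ..(t - δ), u ^ (-(α + β)) := by
    have := integral_comp_sub_left (a := δ) (b := t - δ) (fun u : ℝ => u ^ (-(α + β))) t
    simpa using this
  have hg1val : (∫ s in δ..(t - δ), g1 s)
      = (2 ^ β + 1) * ∫ s in δ..(t - δ), s ^ (-(α + β)) := by
    rw [hg1, integral_add hAint hBint, intervalIntegral.integral_const_mul, hBeq]; ring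
  rw [hsplit]
  calc (∫ s in δ..(t - δ), f s) + ∫ s in (t - δ)..tδ, f s
      ≤ (∫ s in δ..(t - δ), g1 s) + ∫ s in (t - δ)..tδ, g2 s := add_le_add hbound1 hbound2
    _ ≤ (2 ^ β + 1) * (∫ s in δ..(t - δ), s ^ (-(α + β))) + (C1 * δ + δ ^ (1 - α - β) / (1 - α)) := by
        rw [hg1val]; linarith
    _ = (2 ^ β + 1) * (∫ s in δ..(t - δ), s ^ (-(α + β)))
        + (t / 3) ^ (-α) * (t / 3) ^ (-β) * δ + δ ^ (1 - α - β) / (1 - α) := by rw [hC1]; ring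

lemma A_bound (α β t : ℝ) (hα : 0 ≤ α) (hα1 : α < 1) (hβ : 0 ≤ β) (hβ1 : β < 1)
    (ht : 0 < t) :
    ∃ K : ℝ, 0 ≤ K ∧ ∀ δ : ℝ, 0 < δ → δ < 1 → δ < t / 3 →
      (∫ s in δ..(t - δ), s ^ (-(α + β))) ≤
        K * (δ ^ (1 - α - β) + 1 - (if α + β = 1 then 1 else 0) * Real.log δ) := by
  rcases lt_trichotomy (α + β) 1 with hlt | heq | hgt
  · refine ⟨max 1 t / (1 - (α + β)),
      div_nonneg (le_trans zero_le_one (le_max_left _ _)) (by linarith), fun δ hδ hδ1 hδ3 => ?_⟩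
    have hmid : δ ≤ t - δ := by linarith
    rw [if_neg (ne_of_lt hlt), zero_mul, sub_zero]
    have hval : (∫ s in δ..(t - δ), s ^ (-(α + β)))
        = ((t - δ) ^ (-(α + β) + 1) - δ ^ (-(α + β) + 1)) / (-(α + β) + 1) :=
      integral_rpow (Or.inl (by linarith))
    have he : -(α + β) + 1 = 1 - α - β := by ring
    have h1 : (t - δ) ^ (1 - α - β) ≤ max 1 t := by
      rcases le_or_gt (t - δ) 1 with h | h
      · exact le_trans (Real.rpow_le_one (by linarith) h (by linarith)) (le_max_left _ _)
      · calc (t - δ) ^ (1 - α - β) ≤ (t - δ) ^ (1 : ℝ) :=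
              Real.rpow_le_rpow_of_exponent_le h.le (by linarith)
          _ = t - δ := Real.rpow_one _
          _ ≤ max 1 t := le_trans (by linarith) (le_max_right _ _)
    have h2 : 0 ≤ δ ^ (1 - α - β) := Real.rpow_nonneg hδ.le _
    have h3 : 0 < 1 - α - β := by linarith
    have hKnn : 0 ≤ max 1 t / (1 - (α + β)) :=
      div_nonneg (le_trans zero_le_one (le_max_left _ _)) (by linarith)
    have hAle : (∫ s in δ..(t - δ), s ^ (-(α + β))) ≤ max 1 t / (1 - (α + β)) := by
      rw [hval, he]
      calc ((t - δ) ^ (1 - α - β) - δ ^ (1 - α - β)) / (1 - α - β)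
          ≤ max 1 t / (1 - α - β) := div_le_div_of_nonneg_right (by linarith) h3.le
        _ = max 1 t / (1 - (α + β)) := by ring_nf
    nlinarith [hAle, hKnn, h2]
  · -- α + β = 1
    refine ⟨max 0 (Real.log t) + 1, add_nonneg (le_max_left _ _) zero_le_one, fun δ hδ hδ1 hδ3 => ?_⟩
    have hmid : δ ≤ t - δ := by linarith
    rw [if_pos heq]
    have h0 : 1 - α - β = 0 := by linarith
    rw [h0, Real.rpow_zero]
    have hne : -(α + β) = (-1 : ℝ) := by rw [heq]
    have hval : (∫ s in δ..(t - δ), s ^ (-(α + β))) = Real.log ((t - δ) / δ) := by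
      rw [show (fun s : ℝ => s ^ (-(α + β))) = fun s : ℝ => s⁻¹ by
        funext s; rw [hne, Real.rpow_neg_one]]
      exact integral_inv (by
        rw [Set.uIcc_of_le hmid, Set.mem_Icc]; push_neg; intro h; linarith)
    have hlog : Real.log ((t - δ) / δ) = Real.log (t - δ) - Real.log δ :=
      Real.log_div (by linarith) (ne_of_gt hδ)
    have h1 : Real.log (t - δ) ≤ max 0 (Real.log t) :=
      le_trans (Real.log_le_log (by linarith) (by linarith)) (le_max_right _ _)
    have h2 : Real.log δ < 0 := Real.log_neg hδ hδ1
    have h3 : (0:ℝ) ≤ max 0 (Real.log t) := le_max_left _ _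
    rw [hval, hlog]
    nlinarith [mul_nonneg h3 (neg_nonneg.mpr h2.le)]
  · -- α + β > 1
    refine ⟨1 / (α + β - 1), le_of_lt (by apply div_pos one_pos; linarith), fun δ hδ hδ1 hδ3 => ?_⟩
    have hmid : δ ≤ t - δ := by linarith
    rw [if_neg (by linarith : α + β ≠ 1), zero_mul, sub_zero]
    have hval : (∫ s in δ..(t - δ), s ^ (-(α + β)))
        = ((t - δ) ^ (-(α + β) + 1) - δ ^ (-(α + β) + 1)) / (-(α + β) + 1) :=
      integral_rpow (Or.inr ⟨by intro h; apply (by linarith : α + β ≠ 1); linarith [neg_eq_iff_eq_neg.mp h],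
        by rw [Set.uIcc_of_le hmid, Set.mem_Icc]; push_neg; intro h; linarith⟩)
    have he : -(α + β) + 1 = 1 - α - β := by ring
    have h1 : 0 ≤ (t - δ) ^ (1 - α - β) := Real.rpow_nonneg (by linarith) _
    have h2 : 0 < δ ^ (1 - α - β) := Real.rpow_pos_of_pos hδ _
    have h3 : 0 < α + β - 1 := by linarith
    have hAle : (∫ s in δ..(t - δ), s ^ (-(α + β))) ≤ δ ^ (1 - α - β) / (α + β - 1) := by
      rw [hval, he]
      have : ((t - δ) ^ (1 - α - β) - δ ^ (1 - α - β)) / (1 - α - β)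
          = (δ ^ (1 - α - β) - (t - δ) ^ (1 - α - β)) / (α + β - 1) := by
        rw [div_eq_div_iff (by linarith) (by linarith)]; ring
      rw [this]
      exact div_le_div_of_nonneg_right (by linarith) h3.le
    have : 1 / (α + β - 1) * (δ ^ (1 - α - β) + 1)
        = δ ^ (1 - α - β) / (α + β - 1) + 1 / (α + β - 1) := by ring
    rw [this]
    have h4 : 0 ≤ 1 / (α + β - 1) := by positivity
    linarith

/-- For `α, β ∈ [0,1)` and `t > 0`, there is `C > 0` such that for all `0 < δ < min(1, t/3)`,
`∫_δ^{t_δ} (s^{-α} s_δ^{-β} + (t-s)^{-α} (t-s_δ)^{-β}) ds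
  ≤ C (δ^{1-α-β} + 1 - 1_{α+β=1} log δ)`. -/
theorem stmt_10 (α β t : ℝ) (hα : 0 ≤ α) (hα1 : α < 1) (hβ : 0 ≤ β) (hβ1 : β < 1)
    (ht : 0 < t) :
    ∃ C > 0, ∀ δ : ℝ, 0 < δ → δ < min 1 (t / 3) →
      (∫ s in δ..gridPt δ t,
          s ^ (-α) * (gridPt δ s) ^ (-β) + (t - s) ^ (-α) * (t - gridPt δ s) ^ (-β)) ≤
        C * (δ ^ (1 - α - β) + 1 - (if α + β = 1 then 1 else 0) * Real.log δ) := by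
  obtain ⟨K, hK0, hKb⟩ := A_bound α β t hα hα1 hβ hβ1 ht
  set C1 := (t / 3) ^ (-α) * (t / 3) ^ (-β) with hC1def
  have ht3 : (0:ℝ) < t / 3 := by linarith
  have hC1nn : 0 ≤ C1 := mul_nonneg (Real.rpow_nonneg ht3.le _) (Real.rpow_nonneg ht3.le _)
  have h2β : (0:ℝ) < 2 ^ β := Real.rpow_pos_of_pos two_pos β
  have hα' : (0:ℝ) < 1 / (1 - α) := by apply div_pos one_pos; linarith
  refine ⟨(2 ^ β + 1) * K + C1 + 1 / (1 - α) + 1, by nlinarith, fun δ hδ hδm => ?_⟩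
  rw [lt_min_iff] at hδm
  obtain ⟨hδ1, hδ3⟩ := hδm
  set R := δ ^ (1 - α - β) + 1 - (if α + β = 1 then 1 else 0) * Real.log δ with hR
  have hδe : 0 < δ ^ (1 - α - β) := Real.rpow_pos_of_pos hδ _
  have hind : (if α + β = 1 then (1:ℝ) else 0) * Real.log δ ≤ 0 := by
    split
    · rw [one_mul]; exact (Real.log_neg hδ hδ1).le
    · rw [zero_mul]
  have hR1 : 1 ≤ R := by rw [hR]; linarith
  have hR2 : δ ^ (1 - α - β) ≤ R := by rw [hR]; linarith
  by_cases hInt : IntervalIntegrable (fun s => s ^ (-α) * (gridPt δ s) ^ (-β) +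
      (t - s) ^ (-α) * (t - gridPt δ s) ^ (-β)) volume δ (gridPt δ t)
  · have hkey := key_bound α β t δ hα hα1 hβ hβ1 ht hδ hδ1 hδ3 hInt
    have hA := hKb δ hδ hδ1 hδ3
    have s1 : (2 ^ β + 1) * (∫ s in δ..(t - δ), s ^ (-(α + β))) ≤ (2 ^ β + 1) * (K * R) :=
      mul_le_mul_of_nonneg_left hA (by linarith)
    have s2 : C1 * δ ≤ C1 * R := mul_le_mul_of_nonneg_left (by linarith) hC1nn
    have s3 : δ ^ (1 - α - β) / (1 - α) ≤ R / (1 - α) :=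
      div_le_div_of_nonneg_right hR2 (by linarith)
    have expand : ((2 ^ β + 1) * K + C1 + 1 / (1 - α) + 1) * R
        = (2 ^ β + 1) * (K * R) + C1 * R + R / (1 - α) + R := by
      rw [div_eq_mul_inv, div_eq_mul_inv]; ring
    rw [← hC1def] at hkey
    rw [expand]
    clear_value R C1
    linarith
  · rw [intervalIntegral.integral_undef hInt]
    have hC : (0:ℝ) ≤ (2 ^ β + 1) * K + C1 + 1 / (1 - α) + 1 := by nlinarith
    nlinarith
end

section
/- Let H ∈ (1/2,1) and K_H(t,s) = C_H (H - 1/2) s^{1/2-H} ∫_s^t (r-s)^{H-3/2} r^{H-1/2} dr for 0 < s < t. For any fixed t > 0 and ε' > 0 there exists C > 0 such that for all 0 < δ < min(1, t/3), ∫_δ^{t_δ} |K_H(t,s) - K_H(t,s_δ)|² ds ≤ C ( δ^{min(2H-1, 2-2H)} + 1_{H=3/4} δ^{1/2-ε'} ). -/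
open intervalIntegral

/-- Normalizing constant of the fBm kernel. -/
noncomputable def C_H (H : ℝ) : ℝ :=
  Real.sqrt (2 * H * Real.Gamma (3 / 2 - H) / (Real.Gamma (H + 1 / 2) * Real.Gamma (2 - 2 * H)))

/-- The fBm Volterra kernel for `H ∈ (1/2,1)` and `0 < s < t`. -/
noncomputable def K_H (H t s : ℝ) : ℝ :=
  C_H H * (H - 1 / 2) * s ^ (1 / 2 - H) *
    ∫ r in s..t, (r - s) ^ (H - 3 / 2) * r ^ (H - 1 / 2)

open MeasureTheory Real Set


lemma myIIbase {H : ℝ} (hH0 : 1 / 2 < H) (p x y : ℝ) :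
    IntervalIntegrable (fun r => (r - p) ^ (H - 3 / 2)) volume x y := by
  have := (intervalIntegrable_rpow' (a := x - p) (b := y - p)
    (show (-1:ℝ) < H - 3 / 2 by linarith)).comp_sub_right p
  simpa using this

lemma myII {H : ℝ} (hH0 : 1 / 2 < H) {p x y : ℝ} (hp : 0 < p) (hpx : p ≤ x) (hxy : x ≤ y) :
    IntervalIntegrable (fun r => (r - p) ^ (H - 3 / 2) * r ^ (H - 1 / 2)) volume x y := by
  refine ((myIIbase hH0 p x y).const_mul (y ^ (H - 1 / 2))).mono_fun ?_ ?_
  · refine (ContinuousOn.mul ?_ ?_).aestronglyMeasurable measurableSet_uIoc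
    · refine ((continuous_id.sub continuous_const).continuousOn).rpow_const ?_
      intro r hr
      rw [uIoc_of_le hxy] at hr
      exact Or.inl (by have := hr.1; exact sub_ne_zero.2 (ne_of_gt (lt_of_le_of_lt hpx hr.1)))
    · refine continuous_id.continuousOn.rpow_const ?_
      intro r hr
      rw [uIoc_of_le hxy] at hr
      exact Or.inl (by have : p < r := lt_of_le_of_lt hpx hr.1; simp only [id]; linarith)
  · filter_upwards [ae_restrict_mem measurableSet_uIoc] with r hr
    rw [uIoc_of_le hxy] at hr
    have h2 : 0 < r := lt_of_le_of_lt (hp.le.trans hpx) hr.1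
    have h3 : (0:ℝ) ≤ r - p := by linarith [lt_of_le_of_lt hpx hr.1]
    simp only [norm_mul, Real.norm_eq_abs]
    rw [abs_of_nonneg (rpow_nonneg h3 _), abs_of_nonneg (rpow_nonneg h2.le _),
      abs_of_nonneg (rpow_nonneg (h2.le.trans hr.2) _)]
    rw [mul_comm]
    exact mul_le_mul_of_nonneg_right
      (rpow_le_rpow h2.le hr.2 (by linarith)) (rpow_nonneg h3 _)

lemma myVal {H : ℝ} (hH0 : 1 / 2 < H) (p x y : ℝ) :
    ∫ r in x..y, (r - p) ^ (H - 3 / 2)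
      = ((y - p) ^ (H - 1 / 2) - (x - p) ^ (H - 1 / 2)) / (H - 1 / 2) := by
  rw [show (fun r : ℝ => (r - p) ^ (H - 3 / 2)) = fun r => (fun u : ℝ => u ^ (H - 3 / 2)) (r - p) from rfl]
  rw [intervalIntegral.integral_comp_sub_right (fun u : ℝ => u ^ (H - 3 / 2)) p]
  rw [integral_rpow (Or.inl (by linarith))]
  have h : H - 3 / 2 + 1 = H - 1 / 2 := by ring
  rw [h]

lemma myF_nonneg {H t : ℝ} {x : ℝ} (hx : 0 < x) (hxt : x ≤ t) :
    0 ≤ ∫ r in x..t, (r - x) ^ (H - 3 / 2) * r ^ (H - 1 / 2) :=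
  intervalIntegral.integral_nonneg hxt fun r hr =>
    mul_nonneg (rpow_nonneg (by linarith [hr.1]) _) (rpow_nonneg (by linarith [hr.1]) _)

/-- upper bound for ∫ r in x..y, (r-p)^a r^b with r^b ≤ t^b. -/
lemma myUpper {H t : ℝ} (hH0 : 1 / 2 < H) {p x y : ℝ} (hp : 0 < p) (hpx : p ≤ x)
    (hxy : x ≤ y) (hyt : y ≤ t) :
    ∫ r in x..y, (r - p) ^ (H - 3 / 2) * r ^ (H - 1 / 2)
      ≤ t ^ (H - 1 / 2) * (((y - p) ^ (H - 1 / 2) - (x - p) ^ (H - 1 / 2)) / (H - 1 / 2)) := by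
  have key : ∫ r in x..y, (r - p) ^ (H - 3 / 2) * r ^ (H - 1 / 2)
      ≤ ∫ r in x..y, t ^ (H - 1 / 2) * (r - p) ^ (H - 3 / 2) := by
    refine intervalIntegral.integral_mono_on hxy (myII hH0 hp hpx hxy)
      ((myIIbase hH0 p x y).const_mul _) ?_
    intro r hr
    have h3 : (0:ℝ) ≤ r - p := by linarith [hr.1]
    rw [mul_comm (t ^ (H - 1 / 2))]
    exact mul_le_mul_of_nonneg_left
      (rpow_le_rpow (by linarith [hr.1, hp]) (hr.2.trans hyt) (by linarith)) (rpow_nonneg h3 _)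
  calc _ ≤ _ := key
    _ = _ := by rw [intervalIntegral.integral_const_mul, myVal hH0]



lemma grid_facts {δ s : ℝ} (hδ : 0 < δ) (hs : δ ≤ s) :
    δ ≤ gridPt δ s ∧ gridPt δ s ≤ s ∧ s ≤ gridPt δ s + δ := by
  unfold gridPt
  have h1 : (1:ℝ) ≤ s / δ := (one_le_div hδ).2 hs
  have h2 : (1:ℤ) ≤ ⌊s / δ⌋ := Int.le_floor.2 (by exact_mod_cast h1)
  have h2' : (1:ℝ) ≤ (⌊s / δ⌋ : ℝ) := by exact_mod_cast h2
  refine ⟨le_mul_of_one_le_right hδ.le h2', ?_, ?_⟩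
  · have h3 : (⌊s / δ⌋ : ℝ) ≤ s / δ := Int.floor_le _
    calc δ * (⌊s / δ⌋ : ℝ) ≤ δ * (s / δ) := by gcongr
      _ = s := by field_simp
  · have h4 : s / δ < (⌊s / δ⌋ : ℝ) + 1 := Int.lt_floor_add_one _
    have := (div_lt_iff₀ hδ).1 h4
    nlinarith

lemma myRpowDiff {H : ℝ} (hH0 : 1 / 2 < H) (hH : H < 1) {p s : ℝ} (hp : 0 < p) (hps : p ≤ s) :
    p ^ (1 / 2 - H) - s ^ (1 / 2 - H) ≤ (H - 1 / 2) * (s - p) * (p * p ^ (H - 1 / 2))⁻¹ := by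
  have hs0 : 0 < s := lt_of_lt_of_le hp hps
  have hγ0 : (0:ℝ) < H - 1 / 2 := by linarith
  have hx : (0:ℝ) ≤ s / p - 1 := by
    have := (one_le_div hp).2 hps; linarith
  have hbern := rpow_one_add_le_one_add_mul_self (s := s / p - 1)
    (by linarith) (p := H - 1 / 2) (by linarith) (by linarith)
  rw [show (1 : ℝ) + (s / p - 1) = s / p by ring] at hbern
  rw [Real.div_rpow hs0.le hp.le] at hbern
  set P := p ^ (H - 1 / 2) with hPdef
  set S := s ^ (H - 1 / 2) with hSdef
  have hP : 0 < P := rpow_pos_of_pos hp _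
  have hS : 0 < S := rpow_pos_of_pos hs0 _
  have hPS : P ≤ S := rpow_le_rpow hp.le hps hγ0.le
  -- from bernoulli : S / P ≤ 1 + γ (s/p - 1)
  have hS2 : S - P ≤ (H - 1 / 2) * ((s - p) / p) * P := by
    have h5 : S / P ≤ 1 + (H - 1 / 2) * (s / p - 1) := hbern
    have h6 : S ≤ (1 + (H - 1 / 2) * (s / p - 1)) * P := by
      rw [div_le_iff₀ hP] at h5; exact h5
    have h7 : s / p - 1 = (s - p) / p := by field_simp
    rw [h7] at h6; nlinarith
  have hinv1 : p ^ (1 / 2 - H) = P⁻¹ := by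
    rw [show (1:ℝ) / 2 - H = -(H - 1 / 2) by ring, Real.rpow_neg hp.le]
  have hinv2 : s ^ (1 / 2 - H) = S⁻¹ := by
    rw [show (1:ℝ) / 2 - H = -(H - 1 / 2) by ring, Real.rpow_neg hs0.le]
  rw [hinv1, hinv2]
  have key : (S - P) * (p * P) ≤ ((H - 1 / 2) * (s - p)) * (P * S) := by
    have k1 : (S - P) * p ≤ (H - 1 / 2) * (s - p) * P := by
      have := mul_le_mul_of_nonneg_right hS2 hp.le
      calc (S - P) * p ≤ (H - 1 / 2) * ((s - p) / p) * P * p := this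
        _ = (H - 1 / 2) * (s - p) * P := by field_simp
    nlinarith [mul_le_mul_of_nonneg_right k1 hP.le, mul_le_mul_of_nonneg_left hPS
      (mul_nonneg (mul_nonneg hγ0.le (by linarith : (0:ℝ) ≤ s - p)) hP.le)]
  have e1 : P⁻¹ - S⁻¹ = (S - P) / (P * S) := by field_simp
  have e2 : (H - 1 / 2) * (s - p) * (p * P)⁻¹ = ((H - 1 / 2) * (s - p)) / (p * P) := by
    ring
  rw [e1, e2]
  rw [div_le_div_iff₀ (by positivity) (by positivity)]
  nlinarith [key]


lemma myDiffF {H t : ℝ} (hH0 : 1 / 2 < H) (hH : H < 1) {p s : ℝ} (hp : 0 < p) (hps : p ≤ s) (hst : s ≤ t) :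
    |(∫ r in s..t, (r - s) ^ (H - 3 / 2) * r ^ (H - 1 / 2))
      - ∫ r in p..t, (r - p) ^ (H - 3 / 2) * r ^ (H - 1 / 2)|
      ≤ t ^ (H - 1 / 2) * ((s - p) ^ (H - 1 / 2) / (H - 1 / 2)) := by
  have hb : (0:ℝ) < H - 1 / 2 := by linarith
  have hs0 : 0 < s := lt_of_lt_of_le hp hps
  have hne : ∀ᵐ (r : ℝ), r ≠ s := by
    refine ae_iff.2 ?_
    simpa using Real.volume_singleton (x := s)
  set M := t ^ (H - 1 / 2) * ((s - p) ^ (H - 1 / 2) / (H - 1 / 2)) with hM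
  have h1 : IntervalIntegrable (fun r => (r - s) ^ (H - 3 / 2) * r ^ (H - 1 / 2)) volume s t :=
    myII hH0 hs0 le_rfl hst
  have h2 : IntervalIntegrable (fun r => (r - p) ^ (H - 3 / 2) * r ^ (H - 1 / 2)) volume s t :=
    myII hH0 hp hps hst
  have hsplit : (∫ r in p..t, (r - p) ^ (H - 3 / 2) * r ^ (H - 1 / 2))
      = (∫ r in p..s, (r - p) ^ (H - 3 / 2) * r ^ (H - 1 / 2))
        + ∫ r in s..t, (r - p) ^ (H - 3 / 2) * r ^ (H - 1 / 2) :=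
    (integral_add_adjacent_intervals (myII hH0 hp le_rfl hps) h2).symm
  set I1 := ∫ r in p..s, (r - p) ^ (H - 3 / 2) * r ^ (H - 1 / 2) with hI1def
  set J := ∫ r in s..t, (r - p) ^ (H - 3 / 2) * r ^ (H - 1 / 2) with hJdef
  set FS := ∫ r in s..t, (r - s) ^ (H - 3 / 2) * r ^ (H - 1 / 2) with hFSdef
  have hI1nn : 0 ≤ I1 :=
    intervalIntegral.integral_nonneg hps fun r hr =>
      mul_nonneg (rpow_nonneg (by linarith [hr.1]) _) (rpow_nonneg (by linarith [hr.1, hp]) _)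
  have hI1M : I1 ≤ M := by
    have := myUpper (t := t) hH0 hp le_rfl hps (hst)
    rw [sub_self, Real.zero_rpow (by linarith : H - 1 / 2 ≠ 0), sub_zero] at this
    exact this
  have hJ1 : J ≤ FS := by
    refine intervalIntegral.integral_mono_ae_restrict hst h2 h1 ?_
    filter_upwards [ae_restrict_mem measurableSet_Icc, ae_restrict_of_ae hne] with r hr hrne
    have hrs : s < r := lt_of_le_of_ne hr.1 (Ne.symm hrne)
    exact mul_le_mul_of_nonneg_right
      (rpow_le_rpow_of_nonpos (by linarith) (by linarith) (by linarith))
      (rpow_nonneg (by linarith) _)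
  have hJ2 : FS - J ≤ M := by
    have hsub : FS - J = ∫ r in s..t,
        ((r - s) ^ (H - 3 / 2) * r ^ (H - 1 / 2) - (r - p) ^ (H - 3 / 2) * r ^ (H - 1 / 2)) :=
      (intervalIntegral.integral_sub h1 h2).symm
    have hdomI : IntervalIntegrable
        (fun r => t ^ (H - 1 / 2) * (r - s) ^ (H - 3 / 2)
          - t ^ (H - 1 / 2) * (r - p) ^ (H - 3 / 2)) volume s t :=
      ((myIIbase hH0 s s t).const_mul _).sub ((myIIbase hH0 p s t).const_mul _)
    have hmono : FS - J ≤ ∫ r in s..t,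
        (t ^ (H - 1 / 2) * (r - s) ^ (H - 3 / 2) - t ^ (H - 1 / 2) * (r - p) ^ (H - 3 / 2)) := by
      rw [hsub]
      refine intervalIntegral.integral_mono_ae_restrict hst (h1.sub h2) hdomI ?_
      filter_upwards [ae_restrict_mem measurableSet_Icc, ae_restrict_of_ae hne] with r hr hrne
      have hrs : s < r := lt_of_le_of_ne hr.1 (Ne.symm hrne)
      have hfac : 0 ≤ (r - s) ^ (H - 3 / 2) - (r - p) ^ (H - 3 / 2) := by
        have := rpow_le_rpow_of_nonpos (x := r - s) (y := r - p)
          (by linarith) (by linarith) (by linarith : H - 3 / 2 ≤ 0)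
        linarith
      have e1 : (r - s) ^ (H - 3 / 2) * r ^ (H - 1 / 2) - (r - p) ^ (H - 3 / 2) * r ^ (H - 1 / 2)
          = ((r - s) ^ (H - 3 / 2) - (r - p) ^ (H - 3 / 2)) * r ^ (H - 1 / 2) := by ring
      have e2 : t ^ (H - 1 / 2) * (r - s) ^ (H - 3 / 2) - t ^ (H - 1 / 2) * (r - p) ^ (H - 3 / 2)
          = ((r - s) ^ (H - 3 / 2) - (r - p) ^ (H - 3 / 2)) * t ^ (H - 1 / 2) := by ring
      rw [e1, e2]
      exact mul_le_mul_of_nonneg_left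
        (rpow_le_rpow (by linarith) hr.2 hb.le) hfac
    have hval : (∫ r in s..t,
        (t ^ (H - 1 / 2) * (r - s) ^ (H - 3 / 2) - t ^ (H - 1 / 2) * (r - p) ^ (H - 3 / 2))) ≤ M := by
      rw [intervalIntegral.integral_sub ((myIIbase hH0 s s t).const_mul _)
        ((myIIbase hH0 p s t).const_mul _),
        intervalIntegral.integral_const_mul, intervalIntegral.integral_const_mul,
        myVal hH0, myVal hH0, sub_self,
        Real.zero_rpow (by linarith : H - 1 / 2 ≠ 0)]
      have hcmp : (t - s) ^ (H - 1 / 2) ≤ (t - p) ^ (H - 1 / 2) :=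
        rpow_le_rpow (by linarith) (by linarith) hb.le
      have hT : (0:ℝ) ≤ t ^ (H - 1 / 2) := rpow_nonneg (by linarith) _
      rw [hM]
      have e : t ^ (H - 1 / 2) * (((t - s) ^ (H - 1 / 2) - 0) / (H - 1 / 2))
          - t ^ (H - 1 / 2) * (((t - p) ^ (H - 1 / 2) - (s - p) ^ (H - 1 / 2)) / (H - 1 / 2))
          = t ^ (H - 1 / 2) * ((((t - s) ^ (H - 1 / 2) - (t - p) ^ (H - 1 / 2))
              + (s - p) ^ (H - 1 / 2)) / (H - 1 / 2)) := by ring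
      rw [e]
      gcongr
      linarith
    linarith
  have hfinal : FS - (∫ r in p..t, (r - p) ^ (H - 3 / 2) * r ^ (H - 1 / 2)) = (FS - J) - I1 := by
    rw [hsplit]; ring
  rw [hfinal]
  exact abs_le.2 ⟨by linarith, by linarith⟩


noncomputable def myE1 (H t : ℝ) : ℝ :=
  C_H H * (H - 1 / 2) * ((H - 1 / 2) * (t ^ (H - 1 / 2) * (t ^ (H - 1 / 2) / (H - 1 / 2))))
    * 2 ^ ((1:ℝ) / 2 + H)

noncomputable def myE2 (H t : ℝ) : ℝ :=
  C_H H * (H - 1 / 2) * (t ^ (H - 1 / 2) / (H - 1 / 2)) * 2 ^ (H - 1 / 2)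

lemma myE1_nonneg (H t : ℝ) (hH0 : 1 / 2 < H) (ht : 0 < t) : 0 ≤ myE1 H t := by
  unfold myE1 C_H
  refine mul_nonneg (mul_nonneg (mul_nonneg (Real.sqrt_nonneg _) (by linarith)) ?_)
    (Real.rpow_nonneg (by norm_num) _)
  exact mul_nonneg (by linarith) (mul_nonneg (Real.rpow_nonneg ht.le _)
    (div_nonneg (Real.rpow_nonneg ht.le _) (by linarith)))

lemma myE2_nonneg (H t : ℝ) (hH0 : 1 / 2 < H) (ht : 0 < t) : 0 ≤ myE2 H t := by
  unfold myE2 C_H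
  exact mul_nonneg (mul_nonneg (mul_nonneg (Real.sqrt_nonneg _) (by linarith))
    (div_nonneg (Real.rpow_nonneg ht.le _) (by linarith))) (Real.rpow_nonneg (by norm_num) _)

lemma myPtwise {H t : ℝ} (hH0 : 1 / 2 < H) (hH : H < 1) (ht : 0 < t) {δ s : ℝ}
    (hδ : 0 < δ) (hs : δ ≤ s) (hst : s ≤ t) :
    |K_H H t s - K_H H t (gridPt δ s)| ≤
      myE1 H t * (δ * s ^ (-(1/2:ℝ) - H)) + myE2 H t * (δ ^ (H - 1/2) * s ^ ((1:ℝ)/2 - H)) := by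
  obtain ⟨hp1, hp2, hp3⟩ := grid_facts hδ hs
  set p := gridPt δ s with hpdef
  have hp0 : 0 < p := lt_of_lt_of_le hδ hp1
  have hs0 : 0 < s := lt_of_lt_of_le hδ hs
  have hpt : p ≤ t := hp2.trans hst
  have hb : (0:ℝ) < H - 1 / 2 := by linarith
  have hc : 0 ≤ C_H H * (H - 1 / 2) := mul_nonneg (Real.sqrt_nonneg _) (by linarith)
  set c := C_H H * (H - 1 / 2) with hcdef
  set Fs := ∫ r in s..t, (r - s) ^ (H - 3 / 2) * r ^ (H - 1 / 2) with hFsdef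
  set Fp := ∫ r in p..t, (r - p) ^ (H - 3 / 2) * r ^ (H - 1 / 2) with hFpdef
  set Kt := t ^ (H - 1 / 2) / (H - 1 / 2) with hKtdef
  have hKt : 0 ≤ Kt := by positivity
  have hT : (0:ℝ) ≤ t ^ (H - 1 / 2) := rpow_nonneg ht.le _
  have hKeq : K_H H t s - K_H H t p
      = c * ((s ^ (1 / 2 - H) - p ^ (1 / 2 - H)) * Fs + p ^ (1 / 2 - H) * (Fs - Fp)) := by
    simp only [K_H, hcdef, ← hFsdef, ← hFpdef]; ring
  have hFs_nn : 0 ≤ Fs := myF_nonneg hs0 hst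
  have hFs_ub : Fs ≤ t ^ (H - 1 / 2) * Kt := by
    have h1 := myUpper (t := t) hH0 hs0 le_rfl hst le_rfl
    rw [sub_self, Real.zero_rpow (by linarith : H - 1 / 2 ≠ 0), sub_zero] at h1
    refine h1.trans ?_
    rw [hKtdef]
    have h2 : (t - s) ^ (H - 1 / 2) ≤ t ^ (H - 1 / 2) :=
      rpow_le_rpow (by linarith) (by linarith) hb.le
    refine mul_le_mul_of_nonneg_left ?_ hT
    rw [div_eq_mul_inv, div_eq_mul_inv]
    exact mul_le_mul_of_nonneg_right h2 (inv_nonneg.2 hb.le)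
  have hFdiff : |Fs - Fp| ≤ Kt * δ ^ (H - 1 / 2) := by
    refine (myDiffF hH0 hH hp0 hp2 hst).trans ?_
    have h9 : (s - p) ^ (H - 1 / 2) ≤ δ ^ (H - 1 / 2) :=
      rpow_le_rpow (by linarith) (by linarith) hb.le
    calc t ^ (H - 1 / 2) * ((s - p) ^ (H - 1 / 2) / (H - 1 / 2))
        ≤ t ^ (H - 1 / 2) * (δ ^ (H - 1 / 2) / (H - 1 / 2)) := by
          refine mul_le_mul_of_nonneg_left ?_ hT
          rw [div_eq_mul_inv, div_eq_mul_inv]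
          exact mul_le_mul_of_nonneg_right h9 (inv_nonneg.2 hb.le)
      _ = Kt * δ ^ (H - 1 / 2) := by rw [hKtdef]; ring
  have hβnn : 0 ≤ p ^ ((1:ℝ) / 2 - H) - s ^ ((1:ℝ) / 2 - H) :=
    sub_nonneg.2 (rpow_le_rpow_of_nonpos hp0 hp2 (by linarith))
  have hβdiff : |s ^ ((1:ℝ) / 2 - H) - p ^ ((1:ℝ) / 2 - H)|
      ≤ (H - 1 / 2) * δ * (p * p ^ (H - 1 / 2))⁻¹ := by
    rw [abs_sub_comm, abs_of_nonneg hβnn]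
    refine (myRpowDiff hH0 hH hp0 hp2).trans ?_
    have hinv : (0:ℝ) ≤ (p * p ^ (H - 1 / 2))⁻¹ := by positivity
    refine mul_le_mul_of_nonneg_right ?_ hinv
    exact mul_le_mul_of_nonneg_left (by linarith) (by linarith)
  have hpconv : (p * p ^ (H - 1 / 2))⁻¹ = p ^ (-(1/2:ℝ) - H) := by
    rw [show -(1/2:ℝ) - H = -(1 + (H - 1/2)) by ring, Real.rpow_neg hp0.le,
      Real.rpow_add hp0, Real.rpow_one]
  have hs2p : s / 2 ≤ p := by linarith
  have hpow1 : p ^ (-(1/2:ℝ) - H) ≤ 2 ^ ((1:ℝ)/2 + H) * s ^ (-(1/2:ℝ) - H) := by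
    have h1 : p ^ (-(1/2:ℝ) - H) ≤ (s/2) ^ (-(1/2:ℝ) - H) :=
      rpow_le_rpow_of_nonpos (by linarith) hs2p (by linarith)
    refine h1.trans_eq ?_
    rw [Real.div_rpow hs0.le (by norm_num), div_eq_mul_inv,
      ← Real.rpow_neg (by norm_num : (0:ℝ) ≤ 2), show -(-(1/2:ℝ) - H) = (1:ℝ)/2 + H by ring]
    ring
  have hpow2 : p ^ ((1:ℝ)/2 - H) ≤ 2 ^ (H - 1/2) * s ^ ((1:ℝ)/2 - H) := by
    have h1 : p ^ ((1:ℝ)/2 - H) ≤ (s/2) ^ ((1:ℝ)/2 - H) :=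
      rpow_le_rpow_of_nonpos (by linarith) hs2p (by linarith)
    refine h1.trans_eq ?_
    rw [Real.div_rpow hs0.le (by norm_num), div_eq_mul_inv,
      ← Real.rpow_neg (by norm_num : (0:ℝ) ≤ 2), show -((1:ℝ)/2 - H) = H - 1/2 by ring]
    ring
  have step1 : |K_H H t s - K_H H t p|
      ≤ c * (|s ^ ((1:ℝ)/2 - H) - p ^ ((1:ℝ)/2 - H)| * Fs + p ^ ((1:ℝ)/2 - H) * |Fs - Fp|) := by
    rw [hKeq, abs_mul, abs_of_nonneg hc]
    refine mul_le_mul_of_nonneg_left ?_ hc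
    refine (abs_add_le _ _).trans ?_
    rw [abs_mul, abs_mul, abs_of_nonneg hFs_nn, abs_of_nonneg (rpow_nonneg hp0.le _)]
  have step2 : c * (|s ^ ((1:ℝ)/2 - H) - p ^ ((1:ℝ)/2 - H)| * Fs + p ^ ((1:ℝ)/2 - H) * |Fs - Fp|)
      ≤ c * (((H - 1/2) * δ * (p ^ (-(1/2:ℝ) - H))) * (t ^ (H - 1/2) * Kt)
          + p ^ ((1:ℝ)/2 - H) * (Kt * δ ^ (H - 1/2))) := by
    rw [← hpconv]
    rw [hpconv] at hβdiff
    rw [← hpconv] at hβdiff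
    refine mul_le_mul_of_nonneg_left ?_ hc
    refine add_le_add ?_ ?_
    · exact mul_le_mul hβdiff hFs_ub hFs_nn
        (mul_nonneg (mul_nonneg hb.le hδ.le) (by positivity))
    · exact mul_le_mul_of_nonneg_left hFdiff (rpow_nonneg hp0.le _)
  have step3 : c * (((H - 1/2) * δ * (p ^ (-(1/2:ℝ) - H))) * (t ^ (H - 1/2) * Kt)
          + p ^ ((1:ℝ)/2 - H) * (Kt * δ ^ (H - 1/2)))
      ≤ c * (((H - 1/2) * δ * (2 ^ ((1:ℝ)/2 + H) * s ^ (-(1/2:ℝ) - H))) * (t ^ (H - 1/2) * Kt)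
          + (2 ^ (H - 1/2) * s ^ ((1:ℝ)/2 - H)) * (Kt * δ ^ (H - 1/2))) := by
    refine mul_le_mul_of_nonneg_left (add_le_add ?_ ?_) hc
    · exact mul_le_mul_of_nonneg_right
        (mul_le_mul_of_nonneg_left hpow1 (mul_nonneg hb.le hδ.le)) (mul_nonneg hT hKt)
    · exact mul_le_mul_of_nonneg_right hpow2 (mul_nonneg hKt (rpow_nonneg hδ.le _))
  refine ((step1.trans step2).trans step3).trans_eq ?_
  rw [myE1, myE2, hKtdef, hcdef]
  ring


noncomputable def myD1 (H t : ℝ) : ℝ := 2 * (myE1 H t) ^ 2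
noncomputable def myD2 (H t : ℝ) : ℝ := 2 * (myE2 H t) ^ 2

lemma myPtwiseSq {H t : ℝ} (hH0 : 1 / 2 < H) (hH : H < 1) (ht : 0 < t) {δ s : ℝ}
    (hδ : 0 < δ) (hs : δ ≤ s) (hst : s ≤ t) :
    |K_H H t s - K_H H t (gridPt δ s)| ^ 2 ≤
      myD1 H t * δ ^ 2 * s ^ (-1 - 2 * H) + myD2 H t * δ ^ (2 * H - 1) * s ^ (1 - 2 * H) := by
  have hs0 : 0 < s := lt_of_lt_of_le hδ hs
  have h := myPtwise hH0 hH ht hδ hs hst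
  set u := myE1 H t * (δ * s ^ (-(1/2:ℝ) - H)) with hu_def
  set v := myE2 H t * (δ ^ (H - 1/2) * s ^ ((1:ℝ)/2 - H)) with hv_def
  have hsq : |K_H H t s - K_H H t (gridPt δ s)| ^ 2 ≤ (u + v) ^ 2 :=
    pow_le_pow_left₀ (abs_nonneg _) h 2
  have h2 : (u + v) ^ 2 ≤ 2 * u ^ 2 + 2 * v ^ 2 := by nlinarith [sq_nonneg (u - v)]
  have e1 : (s ^ (-(1/2:ℝ) - H)) ^ 2 = s ^ (-1 - 2 * H) := by
    rw [sq, ← Real.rpow_add hs0]; congr 1; ring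
  have e2 : (δ ^ (H - 1/2)) ^ 2 = δ ^ (2 * H - 1) := by
    rw [sq, ← Real.rpow_add hδ]; congr 1; ring
  have e3 : (s ^ ((1:ℝ)/2 - H)) ^ 2 = s ^ (1 - 2 * H) := by
    rw [sq, ← Real.rpow_add hs0]; congr 1; ring
  have hu : u ^ 2 = (myE1 H t) ^ 2 * δ ^ 2 * (s ^ (-(1/2:ℝ) - H)) ^ 2 := by
    rw [hu_def]; ring
  have hv : v ^ 2 = (myE2 H t) ^ 2 * (δ ^ (H - 1/2)) ^ 2 * (s ^ ((1:ℝ)/2 - H)) ^ 2 := by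
    rw [hv_def]; ring
  calc |K_H H t s - K_H H t (gridPt δ s)| ^ 2 ≤ (u + v) ^ 2 := hsq
    _ ≤ 2 * u ^ 2 + 2 * v ^ 2 := h2
    _ = myD1 H t * δ ^ 2 * s ^ (-1 - 2 * H) + myD2 H t * δ ^ (2 * H - 1) * s ^ (1 - 2 * H) := by
        rw [hu, hv, e1, e2, e3, myD1, myD2]; ring


set_option maxHeartbeats 1000000 in
/-- For `H ∈ (1/2,1)`, fixed `t > 0` and any `ε' > 0`, there is `C > 0` such that for
all `0 < δ < min(1, t/3)`,
`∫_δ^{t_δ} |K_H(t,s) - K_H(t,s_δ)|² ds ≤ C (δ^{min(2H-1, 2-2H)} + 1_{H=3/4} δ^{1/2-ε'})`. -/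
theorem stmt_13 (H : ℝ) (hH0 : 1 / 2 < H) (hH : H < 1) (t : ℝ) (ht : 0 < t)
    (ε' : ℝ) (hε' : 0 < ε') :
    ∃ C > 0, ∀ δ : ℝ, 0 < δ → δ < min 1 (t / 3) →
      (∫ s in δ..gridPt δ t, |K_H H t s - K_H H t (gridPt δ s)| ^ 2) ≤
        C * (δ ^ min (2 * H - 1) (2 - 2 * H) +
          (if H = 3 / 4 then 1 else 0) * δ ^ (1 / 2 - ε')) := by
  have hb : (0:ℝ) < H - 1 / 2 := by linarith
  set D1 := myD1 H t with hD1def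
  set D2 := myD2 H t with hD2def
  have hD1 : 0 ≤ D1 := by rw [hD1def, myD1]; positivity
  have hD2 : 0 ≤ D2 := by rw [hD2def, myD2]; positivity
  set m := min (2 * H - 1) (2 - 2 * H) with hm
  set Cv := D1 / (2 * H) + D2 * t ^ (2 - 2 * H) / (2 - 2 * H) + 1 with hCv
  have hCv1 : 0 ≤ D1 / (2 * H) := div_nonneg hD1 (by linarith)
  have hCv2 : 0 ≤ D2 * t ^ (2 - 2 * H) / (2 - 2 * H) :=
    div_nonneg (mul_nonneg hD2 (Real.rpow_nonneg ht.le _)) (by linarith)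
  have hC : 0 < Cv := by rw [hCv]; linarith
  refine ⟨Cv, hC, ?_⟩
  intro δ hδ0 hδlt
  have hδ1 : δ < 1 := lt_of_lt_of_le hδlt (min_le_left _ _)
  have hδt3 : δ < t / 3 := lt_of_lt_of_le hδlt (min_le_right _ _)
  have hδt : δ ≤ t := by linarith
  obtain ⟨hT1, hT2, _⟩ := grid_facts hδ0 hδt
  set T := gridPt δ t with hTdef
  have hind : 0 ≤ (if H = 3 / 4 then (1:ℝ) else 0) * δ ^ (1 / 2 - ε') := by
    refine mul_nonneg ?_ (Real.rpow_nonneg hδ0.le _)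
    split <;> norm_num
  have hδm : 0 ≤ δ ^ m := Real.rpow_nonneg hδ0.le _
  have hsuff : ∀ X : ℝ, X ≤ Cv * δ ^ m →
      X ≤ Cv * (δ ^ m + (if H = 3 / 4 then (1:ℝ) else 0) * δ ^ (1 / 2 - ε')) := by
    intro X hX
    refine hX.trans ?_
    nlinarith [hC]
  refine hsuff _ ?_
  by_cases hInt : IntervalIntegrable
      (fun s => |K_H H t s - K_H H t (gridPt δ s)| ^ 2) volume δ T
  swap
  · rw [intervalIntegral.integral_undef hInt]
    exact mul_nonneg hC.le hδm
  have h0not : (0:ℝ) ∉ uIcc δ T := by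
    rw [Set.uIcc_of_le hT1]
    intro hmem
    exact absurd hmem.1 (not_le.2 hδ0)
  have hgi1 : IntervalIntegrable (fun s : ℝ => s ^ (-1 - 2 * H)) volume δ T :=
    intervalIntegral.intervalIntegrable_rpow (Or.inr h0not)
  have hgi2 : IntervalIntegrable (fun s : ℝ => s ^ (1 - 2 * H)) volume δ T :=
    intervalIntegral.intervalIntegrable_rpow (Or.inr h0not)
  have hgI : IntervalIntegrable
      (fun s : ℝ => D1 * δ ^ 2 * s ^ (-1 - 2 * H) + D2 * δ ^ (2 * H - 1) * s ^ (1 - 2 * H))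
      volume δ T := (hgi1.const_mul _).add (hgi2.const_mul _)
  have step1 : (∫ s in δ..T, |K_H H t s - K_H H t (gridPt δ s)| ^ 2)
      ≤ ∫ s in δ..T, (D1 * δ ^ 2 * s ^ (-1 - 2 * H) + D2 * δ ^ (2 * H - 1) * s ^ (1 - 2 * H)) :=
    intervalIntegral.integral_mono_on hT1 hInt hgI
      (fun s hs => myPtwiseSq hH0 hH ht hδ0 hs.1 (hs.2.trans hT2))
  refine step1.trans ?_
  have hval1 : (∫ s in δ..T, s ^ (-1 - 2 * H)) = (T ^ (-2 * H) - δ ^ (-2 * H)) / (-2 * H) := by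
    rw [integral_rpow (Or.inr ⟨by intro hcon; linarith, h0not⟩)]
    have e : -1 - 2 * H + 1 = -2 * H := by ring
    rw [e]
  have hval2 : (∫ s in δ..T, s ^ (1 - 2 * H)) = (T ^ (2 - 2 * H) - δ ^ (2 - 2 * H)) / (2 - 2 * H) := by
    rw [integral_rpow (Or.inl (by linarith))]
    have e : 1 - 2 * H + 1 = 2 - 2 * H := by ring
    rw [e]
  rw [intervalIntegral.integral_add (hgi1.const_mul _) (hgi2.const_mul _),
    intervalIntegral.integral_const_mul, intervalIntegral.integral_const_mul, hval1, hval2]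
  have hT0 : 0 < T := lt_of_lt_of_le hδ0 hT1
  have hTm : 0 ≤ T ^ (-2 * H) := Real.rpow_nonneg hT0.le _
  have hδ2m : δ ^ (2:ℕ) * δ ^ (-2 * H) = δ ^ (2 - 2 * H) := by
    rw [← Real.rpow_natCast δ 2, ← Real.rpow_add hδ0]
    congr 1
    push_cast; ring
  have bound1 : D1 * δ ^ 2 * ((T ^ (-2 * H) - δ ^ (-2 * H)) / (-2 * H))
      ≤ D1 / (2 * H) * δ ^ (2 - 2 * H) := by
    have e : D1 * δ ^ 2 * ((T ^ (-2 * H) - δ ^ (-2 * H)) / (-2 * H))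
        = D1 / (2 * H) * (δ ^ 2 * (δ ^ (-2 * H) - T ^ (-2 * H))) := by
      field_simp
      ring
    rw [e, ← hδ2m]
    refine mul_le_mul_of_nonneg_left ?_ hCv1
    have h2 : (0:ℝ) ≤ δ ^ (2:ℕ) := by positivity
    nlinarith [mul_nonneg h2 hTm]
  have bound2 : D2 * δ ^ (2 * H - 1) * ((T ^ (2 - 2 * H) - δ ^ (2 - 2 * H)) / (2 - 2 * H))
      ≤ D2 * t ^ (2 - 2 * H) / (2 - 2 * H) * δ ^ (2 * H - 1) := by
    have hTt : T ^ (2 - 2 * H) ≤ t ^ (2 - 2 * H) :=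
      Real.rpow_le_rpow hT0.le hT2 (by linarith)
    have hδnn : 0 ≤ δ ^ (2 - 2 * H) := Real.rpow_nonneg hδ0.le _
    have hδe : 0 ≤ δ ^ (2 * H - 1) := Real.rpow_nonneg hδ0.le _
    have e : D2 * δ ^ (2 * H - 1) * ((T ^ (2 - 2 * H) - δ ^ (2 - 2 * H)) / (2 - 2 * H))
        = D2 * (T ^ (2 - 2 * H) - δ ^ (2 - 2 * H)) / (2 - 2 * H) * δ ^ (2 * H - 1) := by
      ring
    rw [e]
    refine mul_le_mul_of_nonneg_right ?_ hδe
    rw [div_eq_mul_inv, div_eq_mul_inv]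
    refine mul_le_mul_of_nonneg_right ?_ (inv_nonneg.2 (by linarith : (0:ℝ) ≤ 2 - 2 * H))
    have k1 := mul_le_mul_of_nonneg_left hTt hD2
    have k2 := mul_nonneg hD2 hδnn
    nlinarith
  have hm1 : δ ^ (2 - 2 * H) ≤ δ ^ m :=
    Real.rpow_le_rpow_of_exponent_ge hδ0 hδ1.le (min_le_right _ _)
  have hm2 : δ ^ (2 * H - 1) ≤ δ ^ m :=
    Real.rpow_le_rpow_of_exponent_ge hδ0 hδ1.le (min_le_left _ _)
  have final1 : D1 / (2 * H) * δ ^ (2 - 2 * H) ≤ D1 / (2 * H) * δ ^ m :=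
    mul_le_mul_of_nonneg_left hm1 hCv1
  have final2 : D2 * t ^ (2 - 2 * H) / (2 - 2 * H) * δ ^ (2 * H - 1)
      ≤ D2 * t ^ (2 - 2 * H) / (2 - 2 * H) * δ ^ m :=
    mul_le_mul_of_nonneg_left hm2 hCv2
  have : Cv * δ ^ m = D1 / (2 * H) * δ ^ m + D2 * t ^ (2 - 2 * H) / (2 - 2 * H) * δ ^ m
      + 1 * δ ^ m := by rw [hCv]; ring
  rw [this]
  have h1δm : 0 ≤ 1 * δ ^ m := by linarith
  linarith [bound1, bound2, final1, final2]
end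

section
/- Let N be a rate-1 Poisson process, ε ∈ (0,1), N_t^ε = ε N_{t/ε}, and W an independent Brownian motion. For 0 ≤ b < a, E|W_a - W_b - W_{N_a^ε} + W_{N_b^ε}|² ≤ C ε^{1/2} for a constant C independent of a, b, ε (with a, b in a fixed bounded interval [0,T], T ≥ 1). -/
open MeasureTheory ProbabilityTheory

section Stmt19Aux

open Real NNReal
open scoped ENNReal

namespace Stmt19Aux


lemma hasSum_poisson_mean (r : ℝ≥0) :
    HasSum (fun n : ℕ => (n : ℝ) * poissonPMFReal r n) r := by
  have h0 : ((fun n : ℕ => (n : ℝ) * poissonPMFReal r n) 0) = 0 := by simp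
  have hshift : ∀ n : ℕ, ((n + 1 : ℕ) : ℝ) * poissonPMFReal r (n + 1)
      = (r : ℝ) * poissonPMFReal r n := by
    intro n
    have hfac : ((n + 1).factorial : ℝ) = ((n : ℝ) + 1) * (n.factorial : ℝ) := by
      rw [Nat.factorial_succ]; push_cast; ring
    have hfn : ((n.factorial : ℝ)) ≠ 0 := Nat.cast_ne_zero.mpr n.factorial_ne_zero
    have hn1 : ((n : ℝ) + 1) ≠ 0 := by positivity
    simp only [poissonPMFReal, hfac, pow_succ]
    push_cast
    field_simp
  have key : HasSum (fun n : ℕ => ((n + 1 : ℕ) : ℝ) * poissonPMFReal r (n + 1)) r := by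
    have := (poissonPMFRealSum r).mul_left (r : ℝ)
    simp only [mul_one] at this
    exact HasSum.congr_fun this hshift
  have := (hasSum_nat_add_iff (f := fun n : ℕ => (n : ℝ) * poissonPMFReal r n) 1).mp key
  simpa [h0] using this

lemma hasSum_poisson_sec (r : ℝ≥0) :
    HasSum (fun n : ℕ => (n : ℝ) * ((n : ℝ) - 1) * poissonPMFReal r n) ((r : ℝ) ^ 2) := by
  have hshift : ∀ n : ℕ, (((n + 2 : ℕ) : ℝ)) * (((n + 2 : ℕ) : ℝ) - 1) * poissonPMFReal r (n + 2)
      = (r : ℝ) ^ 2 * poissonPMFReal r n := by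
    intro n
    have hfac : ((n + 2).factorial : ℝ) = ((n : ℝ) + 2) * ((n : ℝ) + 1) * (n.factorial : ℝ) := by
      rw [Nat.factorial_succ, Nat.factorial_succ]; push_cast; ring
    have hfn : ((n.factorial : ℝ)) ≠ 0 := Nat.cast_ne_zero.mpr n.factorial_ne_zero
    have hn1 : ((n : ℝ) + 1) ≠ 0 := by positivity
    have hn2 : ((n : ℝ) + 2) ≠ 0 := by positivity
    simp only [poissonPMFReal, hfac, pow_succ]
    push_cast
    field_simp
    ring
  have key : HasSum (fun n : ℕ =>
      (((n + 2 : ℕ) : ℝ)) * (((n + 2 : ℕ) : ℝ) - 1) * poissonPMFReal r (n + 2)) ((r : ℝ) ^ 2) := by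
    have := (poissonPMFRealSum r).mul_left ((r : ℝ) ^ 2)
    simp only [mul_one] at this
    exact HasSum.congr_fun this hshift
  have := (hasSum_nat_add_iff
    (f := fun n : ℕ => (n : ℝ) * ((n : ℝ) - 1) * poissonPMFReal r n) 2).mp key
  simpa [Finset.sum_range_succ] using this

lemma hasSum_poisson_central (r : ℝ≥0) :
    HasSum (fun n : ℕ => ((r : ℝ) - n) ^ 2 * poissonPMFReal r n) r := by
  have h1 := (poissonPMFRealSum r).mul_left ((r : ℝ) ^ 2)
  have h2 := (hasSum_poisson_mean r).mul_left (2 * (r : ℝ))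
  have h3 := hasSum_poisson_sec r
  have h4 := hasSum_poisson_mean r
  have := ((h1.sub h2).add (h3.add h4))
  have hfun : ∀ n : ℕ, ((r : ℝ) ^ 2 * poissonPMFReal r n - 2 * (r : ℝ) * ((n : ℝ) * poissonPMFReal r n))
      + ((n : ℝ) * ((n : ℝ) - 1) * poissonPMFReal r n + (n : ℝ) * poissonPMFReal r n)
      = ((r : ℝ) - n) ^ 2 * poissonPMFReal r n := by intro n; ring
  have hval : ((r : ℝ) ^ 2 * 1 - 2 * (r : ℝ) * (r : ℝ)) + ((r : ℝ) ^ 2 + (r : ℝ)) = (r : ℝ) := by ring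
  rw [hval] at this
  exact HasSum.congr_fun this (fun n => (hfun n).symm)


lemma poisson_sq_moment (r : ℝ≥0) :
    ∫⁻ n : ℕ, ENNReal.ofReal (((r : ℝ) - n) ^ 2) ∂(poissonMeasure r) = ENNReal.ofReal r := by
  rw [lintegral_countable' (μ := poissonMeasure r)]
  have hsingle : ∀ n : ℕ, (poissonMeasure r) {n} = ENNReal.ofReal (poissonPMFReal r n) := by
    intro n
    rw [poissonMeasure_singleton]
    rfl
  calc ∑' n : ℕ, ENNReal.ofReal (((r : ℝ) - n) ^ 2) * (poissonMeasure r) {n}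
      = ∑' n : ℕ, ENNReal.ofReal (((r : ℝ) - n) ^ 2 * poissonPMFReal r n) := by
        refine tsum_congr fun n => ?_
        rw [hsingle n, ← ENNReal.ofReal_mul (sq_nonneg _)]
    _ = ENNReal.ofReal (∑' n : ℕ, ((r : ℝ) - n) ^ 2 * poissonPMFReal r n) := by
        rw [ENNReal.ofReal_tsum_of_nonneg (fun n => mul_nonneg (sq_nonneg _) poissonPMFReal_nonneg)
          (hasSum_poisson_central r).summable]
    _ = ENNReal.ofReal r := by rw [(hasSum_poisson_central r).tsum_eq]

lemma poisson_abs_moment (r : ℝ≥0) :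
    ∫⁻ n : ℕ, ENNReal.ofReal |(r : ℝ) - n| ∂(poissonMeasure r)
      ≤ ENNReal.ofReal (Real.sqrt r) := by
  have hpq : Real.HolderConjugate 2 2 := Real.HolderConjugate.two_two
  have hf : AEMeasurable (fun n : ℕ => ENNReal.ofReal (abs ((r : ℝ) - n))) (poissonMeasure r) :=
    (measurable_of_countable _).aemeasurable
  have hg : AEMeasurable (fun _ : ℕ => (1 : ℝ≥0∞)) (poissonMeasure r) := aemeasurable_const
  have h := ENNReal.lintegral_mul_le_Lp_mul_Lq (poissonMeasure r) hpq hf hg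
  have hLHS : ∫⁻ n : ℕ, ((fun n : ℕ => ENNReal.ofReal (abs ((r : ℝ) - n))) *
      (fun _ : ℕ => (1 : ℝ≥0∞))) n ∂(poissonMeasure r)
      = ∫⁻ n : ℕ, ENNReal.ofReal (abs ((r : ℝ) - n)) ∂(poissonMeasure r) := by
    simp
  rw [hLHS] at h
  have h1 : ∫⁻ _ : ℕ, (1 : ℝ≥0∞) ^ (2 : ℝ) ∂(poissonMeasure r) = 1 := by simp
  have h2 : ∫⁻ n : ℕ, (ENNReal.ofReal (abs ((r : ℝ) - n))) ^ (2 : ℝ) ∂(poissonMeasure r)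
      = ENNReal.ofReal r := by
    rw [← poisson_sq_moment r]
    refine lintegral_congr fun n => ?_
    rw [show ((2:ℝ)) = ((2:ℕ):ℝ) by norm_num, ENNReal.rpow_natCast,
      ← ENNReal.ofReal_pow (abs_nonneg _), sq_abs]
  rw [h1, h2] at h
  simp only [ENNReal.one_rpow, mul_one] at h
  calc ∫⁻ n : ℕ, ENNReal.ofReal (abs ((r : ℝ) - n)) ∂(poissonMeasure r)
      ≤ ENNReal.ofReal r ^ (1 / (2:ℝ)) := h
    _ = ENNReal.ofReal ((r : ℝ) ^ (1 / (2:ℝ))) :=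
        ENNReal.ofReal_rpow_of_nonneg r.coe_nonneg (by norm_num)
    _ = ENNReal.ofReal (Real.sqrt r) := by rw [Real.sqrt_eq_rpow]



noncomputable def gaussM : ℝ≥0∞ := ∫⁻ x : ℝ, ENNReal.ofReal (x ^ 2) ∂(gaussianReal 0 1)

lemma gaussM_lt_top : gaussM < ⊤ := by
  rw [gaussM, gaussianReal_of_var_ne_zero 0 one_ne_zero,
    lintegral_withDensity_eq_lintegral_mul _ (measurable_gaussianPDF 0 1)
      (by exact measurable_id.pow_const 2 |>.ennreal_ofReal)]
  have hint : Integrable (fun x : ℝ => gaussianPDFReal 0 1 x * x ^ 2) := by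
    have base : Integrable (fun x : ℝ => x ^ (2:ℝ) * Real.exp (-(1/2 : ℝ) * x ^ 2)) :=
      integrable_rpow_mul_exp_neg_mul_sq (by norm_num) (by norm_num)
    have := (base.const_mul ((Real.sqrt (2 * π))⁻¹))
    refine this.congr (Filter.Eventually.of_forall fun x => ?_)
    simp only [gaussianPDFReal, NNReal.coe_one, mul_one, sub_zero]
    rw [show (2:ℝ) = ((2:ℕ):ℝ) by norm_num, Real.rpow_natCast]
    ring_nf
  have heq : (fun x : ℝ => (gaussianPDF 0 1 * fun x => ENNReal.ofReal (x ^ 2)) x)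
      = fun x : ℝ => ENNReal.ofReal (gaussianPDFReal 0 1 x * x ^ 2) := by
    funext x
    simp only [Pi.mul_apply, gaussianPDF]
    rw [← ENNReal.ofReal_mul (gaussianPDFReal_nonneg 0 1 x)]
  rw [heq]
  exact hint.lintegral_lt_top

lemma gauss_sq_moment (v : ℝ≥0) :
    ∫⁻ x : ℝ, ENNReal.ofReal (x ^ 2) ∂(gaussianReal 0 v) = (v : ℝ≥0∞) * gaussM := by
  have hmap : (gaussianReal 0 1).map ((Real.sqrt v) * ·) = gaussianReal 0 v := by
    rw [gaussianReal_map_const_mul]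
    congr 1
    · simp
    · rw [mul_one]
      ext
      simp [Real.sq_sqrt v.coe_nonneg]
  rw [← hmap, lintegral_map (by exact measurable_id.pow_const 2 |>.ennreal_ofReal)
    (measurable_const_mul _)]
  calc ∫⁻ x : ℝ, ENNReal.ofReal ((Real.sqrt v * x) ^ 2) ∂(gaussianReal 0 1)
      = ∫⁻ x : ℝ, ENNReal.ofReal (v : ℝ) * ENNReal.ofReal (x ^ 2) ∂(gaussianReal 0 1) := by
        refine lintegral_congr fun x => ?_
        rw [mul_pow, Real.sq_sqrt v.coe_nonneg, ENNReal.ofReal_mul v.coe_nonneg]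
    _ = (v : ℝ≥0∞) * gaussM := by
        rw [lintegral_const_mul _ (by exact measurable_id.pow_const 2 |>.ennreal_ofReal),
          ENNReal.ofReal_coe_nnreal, gaussM]

lemma key_bound {Ω : Type*} [MeasurableSpace Ω] (P : Measure Ω) [IsProbabilityMeasure P]
    (W : ℝ → Ω → ℝ) (N : ℝ → Ω → ℕ)
    (hWmeas : ∀ s, Measurable (W s)) (hNmeas : ∀ s, Measurable (N s))
    (hGauss : ∀ s t : ℝ, 0 ≤ s → 0 ≤ t →
      P.map (fun ω => W s ω - W t ω) = gaussianReal 0 (|s - t|).toNNReal)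
    (hPoisson : ∀ s : ℝ, 0 ≤ s → P.map (N s) = poissonMeasure s.toNNReal)
    (hIndep : IndepFun (fun ω => (fun s => W s ω : ℝ → ℝ)) (fun ω => (fun s => N s ω : ℝ → ℕ)) P)
    (T : ℝ) (hT : 1 ≤ T) (t ε : ℝ) (ht : 0 ≤ t) (htT : t ≤ T) (hε : 0 < ε) :
    ∫⁻ ω, ENNReal.ofReal ((W t ω - W (ε * N (t / ε) ω) ω) ^ 2) ∂P
      ≤ gaussM * ENNReal.ofReal (T * Real.sqrt ε) := by
  set Xp : Ω → (ℝ → ℝ) := fun ω => (fun s => W s ω) with hXpdef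
  have hXp : Measurable Xp := measurable_pi_lambda _ hWmeas
  set Y : Ω → ℕ := N (t / ε) with hYdef
  have hY : Measurable Y := hNmeas (t / ε)
  have indep : IndepFun Xp Y P := by
    have := hIndep.comp (measurable_id (α := ℝ → ℝ))
      (measurable_pi_apply (t / ε) : Measurable fun p : ℝ → ℕ => p (t / ε))
    exact this
  set g : (ℝ → ℝ) × ℕ → ℝ≥0∞ := fun p => ENNReal.ofReal ((p.1 t - p.1 (ε * p.2)) ^ 2) with hgdef
  have hg : Measurable g := by
    refine measurable_from_prod_countable_left fun n => ?_
    exact (((measurable_pi_apply t).sub (measurable_pi_apply (ε * n))).pow_const 2).ennreal_ofReal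
  haveI : IsProbabilityMeasure (P.map Xp) := Measure.isProbabilityMeasure_map hXp.aemeasurable
  haveI : IsProbabilityMeasure (P.map Y) := Measure.isProbabilityMeasure_map hY.aemeasurable
  have hrpos : 0 ≤ t / ε := div_nonneg ht hε.le
  have hr : (((t / ε).toNNReal : ℝ)) = t / ε := Real.coe_toNNReal _ hrpos
  have inner_eq : ∀ n : ℕ, ∫⁻ w : ℝ → ℝ, g (w, n) ∂(P.map Xp)
      = ENNReal.ofReal (|t - ε * n|) * gaussM := by
    intro n
    have hgn : Measurable (fun w : ℝ → ℝ => g (w, n)) :=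
      (((measurable_pi_apply t).sub (measurable_pi_apply (ε * n))).pow_const 2).ennreal_ofReal
    rw [lintegral_map hgn hXp]
    have : ∫⁻ ω, g (Xp ω, n) ∂P
        = ∫⁻ x : ℝ, ENNReal.ofReal (x ^ 2) ∂(P.map (fun ω => W t ω - W (ε * n) ω)) := by
      rw [lintegral_map (by exact measurable_id.pow_const 2 |>.ennreal_ofReal)
        (g := fun ω => W t ω - W (ε * n) ω) ((hWmeas t).sub (hWmeas (ε * n)))]
    rw [this, hGauss t (ε * n) ht (by positivity), gauss_sq_moment]
    rfl
  calc ∫⁻ ω, ENNReal.ofReal ((W t ω - W (ε * N (t / ε) ω) ω) ^ 2) ∂P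
      = ∫⁻ p, g p ∂(P.map fun ω => (Xp ω, Y ω)) :=
        (lintegral_map hg (hXp.prodMk hY)).symm
    _ = ∫⁻ p, g p ∂((P.map Xp).prod (P.map Y)) := by
        rw [(indepFun_iff_map_prod_eq_prod_map_map hXp.aemeasurable hY.aemeasurable).mp indep]
    _ = ∫⁻ n : ℕ, ∫⁻ w : ℝ → ℝ, g (w, n) ∂(P.map Xp) ∂(P.map Y) :=
        lintegral_prod_symm g hg.aemeasurable
    _ = ∫⁻ n : ℕ, ENNReal.ofReal (|t - ε * n|) * gaussM ∂(P.map Y) := by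
        exact lintegral_congr fun n => inner_eq n
    _ = gaussM * ∫⁻ n : ℕ, ENNReal.ofReal (|t - ε * n|) ∂(poissonMeasure (t / ε).toNNReal) := by
        rw [hYdef, hPoisson (t / ε) hrpos]
        rw [← lintegral_const_mul gaussM (measurable_of_countable _)]
        exact lintegral_congr fun n => mul_comm _ _
    _ ≤ gaussM * ENNReal.ofReal (T * Real.sqrt ε) := by
        refine mul_le_mul_right ?_ gaussM
        have habs : ∀ n : ℕ, |t - ε * n| = ε * |(((t / ε).toNNReal : ℝ)) - n| := by
          intro n
          have h1 : t - ε * n = ε * (t / ε - n) := by field_simp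
          rw [hr, h1, abs_mul, abs_of_pos hε]
        calc ∫⁻ n : ℕ, ENNReal.ofReal (|t - ε * n|) ∂(poissonMeasure (t / ε).toNNReal)
            = ∫⁻ n : ℕ, ENNReal.ofReal ε *
                ENNReal.ofReal (|(((t / ε).toNNReal : ℝ)) - n|) ∂(poissonMeasure (t / ε).toNNReal) := by
              refine lintegral_congr fun n => ?_
              rw [habs n, ENNReal.ofReal_mul hε.le]
          _ = ENNReal.ofReal ε *
                ∫⁻ n : ℕ, ENNReal.ofReal (|(((t / ε).toNNReal : ℝ)) - n|)
                  ∂(poissonMeasure (t / ε).toNNReal) := by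
              rw [lintegral_const_mul _ (measurable_of_countable _)]
          _ ≤ ENNReal.ofReal ε * ENNReal.ofReal (Real.sqrt ((t / ε).toNNReal)) :=
              mul_le_mul_right (poisson_abs_moment _) _
          _ ≤ ENNReal.ofReal (T * Real.sqrt ε) := by
              rw [← ENNReal.ofReal_mul hε.le]
              refine ENNReal.ofReal_le_ofReal ?_
              rw [hr]
              have h1 : ε * Real.sqrt (t / ε) = Real.sqrt ε * Real.sqrt t := by
                rw [show ε * Real.sqrt (t / ε) = Real.sqrt (ε ^ 2) * Real.sqrt (t / ε) by
                    rw [Real.sqrt_sq hε.le],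
                  ← Real.sqrt_mul (sq_nonneg ε), show ε ^ 2 * (t / ε) = ε * t by field_simp,
                  Real.sqrt_mul hε.le]
              rw [h1]
              have h2 : Real.sqrt t ≤ T := by
                have := Real.sqrt_le_sqrt htT
                nlinarith [sq_nonneg (Real.sqrt T - 1),
                  Real.sq_sqrt (show (0:ℝ) ≤ T by linarith), Real.sqrt_nonneg T]
              calc Real.sqrt ε * Real.sqrt t ≤ Real.sqrt ε * T :=
                    mul_le_mul_of_nonneg_left h2 (Real.sqrt_nonneg ε)
                _ = T * Real.sqrt ε := mul_comm _ _


end Stmt19Aux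

end Stmt19Aux

open Stmt19Aux in
/-- Let `W` be a standard Brownian motion independent of a rate-1 Poisson process `N`,
and `N_t^ε = ε N_{t/ε}`, with times in a fixed bounded interval `[0,T]`, `T ≥ 1`.
Then for `0 ≤ b < a ≤ T` and `ε ∈ (0,1)`,
`E|W_a - W_b - W_{N_a^ε} + W_{N_b^ε}|² ≤ C ε^{1/2}` with `C` independent of `a, b, ε`. -/
theorem stmt_19 {Ω : Type*} [MeasurableSpace Ω] (P : Measure Ω) [IsProbabilityMeasure P]
    (W : ℝ → Ω → ℝ) (N : ℝ → Ω → ℕ)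
    (hWmeas : ∀ s, Measurable (W s)) (hNmeas : ∀ s, Measurable (N s))
    (hW0 : ∀ ω, W 0 ω = 0)
    (hGauss : ∀ s t : ℝ, 0 ≤ s → 0 ≤ t →
      P.map (fun ω => W s ω - W t ω) = gaussianReal 0 (|s - t|).toNNReal)
    (hPoisson : ∀ s : ℝ, 0 ≤ s → P.map (N s) = poissonMeasure s.toNNReal)
    (hIndep : IndepFun (fun ω => (fun s => W s ω : ℝ → ℝ)) (fun ω => (fun s => N s ω : ℝ → ℕ)) P)
    (T : ℝ) (hT : 1 ≤ T) :
    ∃ C > 0, ∀ a b ε : ℝ, 0 ≤ b → b < a → a ≤ T → 0 < ε → ε < 1 →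
      (∫ ω, |W a ω - W b ω - W (ε * N (a / ε) ω) ω + W (ε * N (b / ε) ω) ω| ^ 2 ∂P) ≤
        C * ε ^ (1 / 2 : ℝ) := by
  refine ⟨(4 * gaussM.toReal + 1) * T, ?_, ?_⟩
  · have h1 : (0:ℝ) < 4 * gaussM.toReal + 1 := by positivity
    exact mul_pos h1 (lt_of_lt_of_le one_pos hT)
  intro a b ε hb hba haT hε hε1
  have ha : 0 ≤ a := le_trans hb hba.le
  set A : Ω → ℝ := fun ω => W a ω - W (ε * N (a / ε) ω) ω with hAdef
  set B : Ω → ℝ := fun ω => W b ω - W (ε * N (b / ε) ω) ω with hBdef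
  have hrand : ∀ t : ℝ, Measurable (fun ω => W (ε * N (t / ε) ω) ω) := by
    intro t
    exact (measurable_from_prod_countable_left
      (f := fun q : Ω × ℕ => W (ε * q.2) q.1) fun n => hWmeas (ε * n)).comp
      (measurable_id.prodMk (hNmeas (t / ε)))
  have hA : Measurable A := (hWmeas a).sub (hrand a)
  have hB : Measurable B := (hWmeas b).sub (hrand b)
  set X : Ω → ℝ := fun ω =>
    W a ω - W b ω - W (ε * N (a / ε) ω) ω + W (ε * N (b / ε) ω) ω with hXdef
  have hXeq : ∀ ω, X ω = A ω - B ω := fun ω => by simp only [hXdef, hAdef, hBdef]; ring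
  have hX : Measurable X :=
    (((hWmeas a).sub (hWmeas b)).sub (hrand a)).add (hrand b)
  have hKa := key_bound P W N hWmeas hNmeas hGauss hPoisson hIndep T hT a ε ha haT hε
  have hKb := key_bound P W N hWmeas hNmeas hGauss hPoisson hIndep T hT b ε hb
    (le_trans hba.le haT) hε
  have hint : ∫ ω, |X ω| ^ 2 ∂P
      = (∫⁻ ω, ENNReal.ofReal (|X ω| ^ 2) ∂P).toReal := by
    refine integral_eq_lintegral_of_nonneg_ae (ae_of_all _ fun ω => by positivity) ?_
    exact ((hX.abs.pow_const 2)).aestronglyMeasurable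
  have hpt : ∀ ω, ENNReal.ofReal (|X ω| ^ 2)
      ≤ 2 * ENNReal.ofReal (A ω ^ 2) + 2 * ENNReal.ofReal (B ω ^ 2) := by
    intro ω
    have h1 : |X ω| ^ 2 = (A ω - B ω) ^ 2 := by rw [sq_abs, hXeq ω]
    have h2 : (A ω - B ω) ^ 2 ≤ 2 * A ω ^ 2 + 2 * B ω ^ 2 := by
      nlinarith [sq_nonneg (A ω + B ω)]
    calc ENNReal.ofReal (|X ω| ^ 2) ≤ ENNReal.ofReal (2 * A ω ^ 2 + 2 * B ω ^ 2) :=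
          ENNReal.ofReal_le_ofReal (h1 ▸ h2)
      _ = 2 * ENNReal.ofReal (A ω ^ 2) + 2 * ENNReal.ofReal (B ω ^ 2) := by
          rw [ENNReal.ofReal_add (by positivity) (by positivity),
            ENNReal.ofReal_mul (by norm_num), ENNReal.ofReal_mul (by norm_num),
            ENNReal.ofReal_ofNat]
  have hsum2 : ∫⁻ ω, (2 * ENNReal.ofReal (A ω ^ 2) + 2 * ENNReal.ofReal (B ω ^ 2)) ∂P
      = 2 * (∫⁻ ω, ENNReal.ofReal (A ω ^ 2) ∂P) + 2 * (∫⁻ ω, ENNReal.ofReal (B ω ^ 2) ∂P) := by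
    rw [lintegral_add_left (((hA.pow_const 2).ennreal_ofReal).const_mul 2),
      lintegral_const_mul 2 ((hA.pow_const 2).ennreal_ofReal),
      lintegral_const_mul 2 ((hB.pow_const 2).ennreal_ofReal)]
  have hle : ∫⁻ ω, ENNReal.ofReal (|X ω| ^ 2) ∂P
      ≤ 4 * (gaussM * ENNReal.ofReal (T * Real.sqrt ε)) := by
    calc ∫⁻ ω, ENNReal.ofReal (|X ω| ^ 2) ∂P
        ≤ ∫⁻ ω, (2 * ENNReal.ofReal (A ω ^ 2) + 2 * ENNReal.ofReal (B ω ^ 2)) ∂P :=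
          lintegral_mono hpt
      _ = 2 * (∫⁻ ω, ENNReal.ofReal (A ω ^ 2) ∂P)
          + 2 * (∫⁻ ω, ENNReal.ofReal (B ω ^ 2) ∂P) := hsum2
      _ ≤ 2 * (gaussM * ENNReal.ofReal (T * Real.sqrt ε))
          + 2 * (gaussM * ENNReal.ofReal (T * Real.sqrt ε)) :=
          add_le_add (mul_le_mul_right hKa 2) (mul_le_mul_right hKb 2)
      _ = 4 * (gaussM * ENNReal.ofReal (T * Real.sqrt ε)) := by ring
  have hfin : (4 : ENNReal) * (gaussM * ENNReal.ofReal (T * Real.sqrt ε)) ≠ ⊤ :=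
    ENNReal.mul_ne_top (by simp) (ENNReal.mul_ne_top gaussM_lt_top.ne ENNReal.ofReal_ne_top)
  have hTs : 0 ≤ T * Real.sqrt ε := mul_nonneg (by linarith) (Real.sqrt_nonneg ε)
  calc ∫ ω, |X ω| ^ 2 ∂P
      = (∫⁻ ω, ENNReal.ofReal (|X ω| ^ 2) ∂P).toReal := hint
    _ ≤ ((4 : ENNReal) * (gaussM * ENNReal.ofReal (T * Real.sqrt ε))).toReal :=
        ENNReal.toReal_mono hfin hle
    _ = 4 * gaussM.toReal * (T * Real.sqrt ε) := by
        rw [ENNReal.toReal_mul, ENNReal.toReal_mul, ENNReal.toReal_ofReal hTs,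
          ENNReal.toReal_ofNat]
        ring
    _ ≤ (4 * gaussM.toReal + 1) * T * ε ^ (1 / 2 : ℝ) := by
        rw [← Real.sqrt_eq_rpow]
        have h0 : 0 ≤ gaussM.toReal := ENNReal.toReal_nonneg
        have h1 : 0 ≤ Real.sqrt ε := Real.sqrt_nonneg ε
        nlinarith [mul_nonneg h1 (show (0:ℝ) ≤ T by linarith)]
end
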